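/- arXiv:2605.09706 — 7 statements merged into one kernel-verified Lean document; each statement's English description precedes it below -/
import Mathlib

section
/- Weighted Volterra decomposition identity: let s, t > 0, a, b ≥ 0 and λ > 0. Then, as an identity in [0,∞] for integrals of nonnegative measurable functions: ∫₀^∞ e^{λv} ∫₀^v P_s(v+a−u) P_t(u+b) du dv = ∫₀^∞ e^{λv} ∫₀^∞ P_s(a+r) P_t(v+r+b) dr dv + ∫₀^∞ e^{λu} ∫₀^∞ P_s(u+a+r) P_t(r+b) dr du + 2λ ∫₀^∞ ∫₀^∞ e^{λ(u+v)} ∫₀^∞ P_s(u+a+r) P_t(v+r+b) dr du dv. -/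
open MeasureTheory Real
open scoped Classical

noncomputable section

abbrev E3 : Type := EuclideanSpace ℝ (Fin 3)

/-- Radial three-dimensional free heat kernel `P_t(r) = (4πt)^{-3/2} exp(-r²/(4t))`. -/
def heatR (t r : ℝ) : ℝ :=
  (4 * π * t) ^ (-(3 : ℝ) / 2) * Real.exp (-r ^ 2 / (4 * t))

/-- Three-dimensional free heat kernel `P_t(x,y) = (4πt)^{-3/2} exp(-|x-y|²/(4t))`. -/
def heatK (t : ℝ) (x y : E3) : ℝ :=
  (4 * π * t) ^ (-(3 : ℝ) / 2) * Real.exp (-‖x - y‖ ^ 2 / (4 * t))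

/-- Three-dimensional attractive point interaction heat kernel `P_t^β(x,y)`. -/
def Pbeta (β t : ℝ) (x y : E3) : ℝ :=
  heatK t x y + 2 * t / (‖x‖ * ‖y‖) * heatR t (‖x‖ + ‖y‖)
    + 8 * π * β * t / (‖x‖ * ‖y‖) *
        ∫ u in Set.Ioi (0 : ℝ), Real.exp (4 * π * β * u) * heatR t (u + ‖x‖ + ‖y‖)

/-- Mass excess function `Q_t^β(x)`, with `Q_0^β(x) := 0`. -/
def Qbeta (β t : ℝ) (x : E3) : ℝ :=
  if t = 0 then 0
  else
    (4 * π * β * ‖x‖ * Real.sqrt (π * t))⁻¹ *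
      ∫ w in Set.Ioi (0 : ℝ),
        (Real.exp (4 * π * β * w) - 1) * Real.exp (-(‖x‖ + w) ^ 2 / (4 * t))

/-- Doob-transformed transition density `p_{s,t}^{T,β}(x,y)` (set to `0` at `y = 0`). -/
def doobP (T β s t : ℝ) (x y : E3) : ℝ :=
  if y = 0 then 0
  else (1 + Qbeta β (T - t) y) / (1 + Qbeta β (T - s) x) * Pbeta β (t - s) x y

/-- Complementary error function `erfc(z) = (2/√π) ∫_z^∞ e^{-u²} du`. -/
def erfc (z : ℝ) : ℝ := 2 / Real.sqrt π * ∫ u in Set.Ioi z, Real.exp (-u ^ 2)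


open Set

lemma lint_Ioi_shift (c : ℝ) (f : ℝ → ENNReal) :
    ∫⁻ x in Set.Ioi c, f x = ∫⁻ x in Set.Ioi (0:ℝ), f (x + c) := by
  have h : (fun x : ℝ => x + c) ⁻¹' Set.Ioi c = Set.Ioi 0 := by
    ext x; simp
  rw [← (measurePreserving_add_right volume c).setLIntegral_comp_preimage_emb
      (measurableEmbedding_addRight c) f (Set.Ioi c), h]

lemma meas_param_set {α : Type*} [MeasurableSpace α] (Φ : α → ℝ → ENNReal)
    (hΦ : Measurable (Function.uncurry Φ)) (s : α → Set ℝ)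
    (hs : MeasurableSet {p : α × ℝ | p.2 ∈ s p.1}) :
    Measurable fun x => ∫⁻ y in s x, Φ x y := by
  have hslice : ∀ x : α, MeasurableSet (s x) := fun x => by
    have := hs.preimage (measurable_prodMk_left (x := x))
    simpa [Set.preimage] using this
  have h : ∀ x, ∫⁻ y in s x, Φ x y = ∫⁻ y, ({p : α × ℝ | p.2 ∈ s p.1}.indicator
      (Function.uncurry Φ)) (x, y) := by
    intro x
    rw [← lintegral_indicator (hslice x)]
    refine lintegral_congr fun y => ?_
    by_cases hy : y ∈ s x <;> simp [Set.indicator_apply, hy, Function.uncurry]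
  simp_rw [h]
  exact (hΦ.indicator hs).lintegral_prod_right'

lemma prod_swap' (Φ : ℝ → ℝ → ENNReal) (hΦ : Measurable (Function.uncurry Φ)) :
    ∫⁻ x in Set.Ioi (0:ℝ), ∫⁻ y in Set.Ioi (0:ℝ), Φ x y
      = ∫⁻ y in Set.Ioi (0:ℝ), ∫⁻ x in Set.Ioi (0:ℝ), Φ x y :=
  lintegral_lintegral_swap hΦ.aemeasurable

/-- triangular swap: `{0 < u < v}`. -/
lemma tri_swap (Φ : ℝ → ℝ → ENNReal) (hΦ : Measurable (Function.uncurry Φ)) :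
    ∫⁻ v in Set.Ioi (0:ℝ), ∫⁻ u in Set.Ioo (0:ℝ) v, Φ u v
      = ∫⁻ u in Set.Ioi (0:ℝ), ∫⁻ v in Set.Ioi u, Φ u v := by
  set Ψ : ℝ → ℝ → ENNReal := fun v u => if 0 < u ∧ u < v then Φ u v else 0 with hΨdef
  have hΨ : Measurable (Function.uncurry Ψ) := by
    have hset : MeasurableSet {p : ℝ × ℝ | 0 < p.2 ∧ p.2 < p.1} :=
      (measurableSet_lt measurable_const measurable_snd).inter
        (measurableSet_lt measurable_snd measurable_fst)
    exact Measurable.ite hset (hΦ.comp measurable_swap) measurable_const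
  have h1 : ∀ v, ∫⁻ u, Ψ v u = ∫⁻ u in Set.Ioo 0 v, Φ u v := by
    intro v
    rw [← lintegral_indicator measurableSet_Ioo]
    refine lintegral_congr fun u => ?_
    by_cases hu : u ∈ Set.Ioo (0:ℝ) v
    · simp [hΨdef, Set.indicator_of_mem hu, hu.1, hu.2]
    · rw [Set.indicator_of_notMem hu]
      simp only [hΨdef, Set.mem_Ioo] at *
      simp [hu]
  have h2 : ∀ u, ∫⁻ v, Ψ v u
      = (Set.Ioi (0:ℝ)).indicator (fun u => ∫⁻ v in Set.Ioi u, Φ u v) u := by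
    intro u
    by_cases hu : 0 < u
    · rw [Set.indicator_of_mem (Set.mem_Ioi.2 hu), ← lintegral_indicator measurableSet_Ioi]
      refine lintegral_congr fun v => ?_
      by_cases hv : v ∈ Set.Ioi u
      · simp [hΨdef, Set.indicator_of_mem hv, hu, Set.mem_Ioi.1 hv]
      · rw [Set.indicator_of_notMem hv]
        simp only [Set.mem_Ioi, not_lt] at hv
        simp only [hΨdef]
        rw [if_neg]
        rintro ⟨_, h⟩; exact absurd h (not_lt.2 hv)
    · rw [Set.indicator_of_notMem (by simpa using hu)]
      have : ∀ v, Ψ v u = 0 := fun v => by simp [hΨdef, hu]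
      simp [this]
  have outer : ∫⁻ v in Set.Ioi (0:ℝ), ∫⁻ u in Set.Ioo (0:ℝ) v, Φ u v
      = ∫⁻ v, ∫⁻ u, Ψ v u := by
    rw [← lintegral_indicator measurableSet_Ioi]
    refine lintegral_congr fun v => ?_
    by_cases hv : v ∈ Set.Ioi (0:ℝ)
    · rw [Set.indicator_of_mem hv, h1]
    · rw [Set.indicator_of_notMem hv, h1]
      simp only [Set.mem_Ioi, not_lt] at hv
      rw [Set.Ioo_eq_empty (by linarith), Measure.restrict_empty, lintegral_zero_measure]
  rw [outer, lintegral_lintegral_swap hΨ.aemeasurable]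
  simp_rw [h2]
  rw [lintegral_indicator measurableSet_Ioi]

/-- parametrized swap: `{0 < r < min c y}` vs `{0 < r < c, y > r}`. -/
lemma min_swap (c : ℝ) (Φ : ℝ → ℝ → ENNReal) (hΦ : Measurable (Function.uncurry Φ)) :
    ∫⁻ y in Set.Ioi (0:ℝ), ∫⁻ r in Set.Ioo 0 (min c y), Φ r y
      = ∫⁻ r in Set.Ioo (0:ℝ) c, ∫⁻ y in Set.Ioi r, Φ r y := by
  set Ψ : ℝ → ℝ → ENNReal := fun y r => if 0 < r ∧ r < c ∧ r < y then Φ r y else 0 with hΨdef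
  have hΨ : Measurable (Function.uncurry Ψ) := by
    have hset : MeasurableSet {p : ℝ × ℝ | 0 < p.2 ∧ p.2 < c ∧ p.2 < p.1} :=
      (measurableSet_lt measurable_const measurable_snd).inter
        ((measurableSet_lt measurable_snd measurable_const).inter
          (measurableSet_lt measurable_snd measurable_fst))
    exact Measurable.ite hset (hΦ.comp measurable_swap) measurable_const
  have h1 : ∀ y, ∫⁻ r, Ψ y r = ∫⁻ r in Set.Ioo 0 (min c y), Φ r y := by
    intro y
    rw [← lintegral_indicator measurableSet_Ioo]
    refine lintegral_congr fun r => ?_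
    by_cases hr : r ∈ Set.Ioo (0:ℝ) (min c y)
    · obtain ⟨h0, hm⟩ := hr
      rw [lt_min_iff] at hm
      simp [hΨdef, Set.indicator_of_mem (Set.mem_Ioo.2 ⟨h0, lt_min_iff.2 hm⟩), h0, hm.1, hm.2]
    · rw [Set.indicator_of_notMem hr]
      simp only [hΨdef]
      rw [if_neg]
      rintro ⟨h0, h1, h2⟩
      exact hr (Set.mem_Ioo.2 ⟨h0, lt_min_iff.2 ⟨h1, h2⟩⟩)
  have h2 : ∀ r, ∫⁻ y, Ψ y r
      = (Set.Ioo (0:ℝ) c).indicator (fun r => ∫⁻ y in Set.Ioi r, Φ r y) r := by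
    intro r
    by_cases hr : r ∈ Set.Ioo (0:ℝ) c
    · rw [Set.indicator_of_mem hr, ← lintegral_indicator measurableSet_Ioi]
      refine lintegral_congr fun y => ?_
      by_cases hy : y ∈ Set.Ioi r
      · simp [hΨdef, Set.indicator_of_mem hy, hr.1, hr.2, Set.mem_Ioi.1 hy]
      · rw [Set.indicator_of_notMem hy]
        simp only [Set.mem_Ioi, not_lt] at hy
        simp only [hΨdef]
        rw [if_neg]
        rintro ⟨_, _, h⟩; exact absurd h (not_lt.2 hy)
    · rw [Set.indicator_of_notMem hr]
      simp only [Set.mem_Ioo, not_and] at hr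
      have : ∀ y, Ψ y r = 0 := fun y => by
        simp only [hΨdef]; rw [if_neg]; rintro ⟨h0, h1, _⟩; exact hr h0 h1
      simp [this]
  have outer : ∫⁻ y in Set.Ioi (0:ℝ), ∫⁻ r in Set.Ioo 0 (min c y), Φ r y
      = ∫⁻ y, ∫⁻ r, Ψ y r := by
    rw [← lintegral_indicator measurableSet_Ioi]
    refine lintegral_congr fun y => ?_
    by_cases hy : y ∈ Set.Ioi (0:ℝ)
    · rw [Set.indicator_of_mem hy, h1]
    · rw [Set.indicator_of_notMem hy, h1]
      simp only [Set.mem_Ioi, not_lt] at hy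
      rw [Set.Ioo_eq_empty (not_lt.2 (le_trans (min_le_right c y) hy)), Measure.restrict_empty,
        lintegral_zero_measure]
  rw [outer, lintegral_lintegral_swap hΨ.aemeasurable]
  simp_rw [h2]
  rw [lintegral_indicator measurableSet_Ioo]

lemma exp_split (lam : ℝ) (hlam : 0 < lam) (x y : ℝ) (hx : 0 < x) (hy : 0 < y) :
    ENNReal.ofReal (Real.exp (lam*x)) * ENNReal.ofReal (Real.exp (lam*y))
      = ENNReal.ofReal (Real.exp (lam*(x+y) - 2*lam*(min x y)))
        + ENNReal.ofReal (2*lam) * ∫⁻ r in Set.Ioo 0 (min x y),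
            ENNReal.ofReal (Real.exp (lam*(x-r))) * ENNReal.ofReal (Real.exp (lam*(y-r))) := by
  set m := min x y with hm
  have hm0 : 0 < m := lt_min hx hy
  set c := lam * (x + y) with hc
  -- rewrite the inner integrand
  have hinteg : ∀ r : ℝ, ENNReal.ofReal (Real.exp (lam*(x-r))) * ENNReal.ofReal (Real.exp (lam*(y-r)))
      = ENNReal.ofReal (Real.exp (c - 2*lam*r)) := by
    intro r
    rw [← ENNReal.ofReal_mul (le_of_lt (Real.exp_pos _)), ← Real.exp_add]
    congr 2; rw [hc]; ring
  simp_rw [hinteg]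
  -- compute the lintegral
  have hint : IntegrableOn (fun r => Real.exp (c - 2*lam*r)) (Set.Ioo 0 m) := by
    apply (Continuous.integrableOn_Icc (by fun_prop)).mono_set Set.Ioo_subset_Icc_self
  have hJ : (∫⁻ r in Set.Ioo 0 m, ENNReal.ofReal (Real.exp (c - 2*lam*r)))
      = ENNReal.ofReal ((Real.exp c - Real.exp (c - 2*lam*m)) / (2*lam)) := by
    rw [← ofReal_integral_eq_lintegral_ofReal hint
      (Filter.Eventually.of_forall fun r => le_of_lt (Real.exp_pos _))]
    congr 1
    have h1 : ∫ r in Set.Ioo (0:ℝ) m, Real.exp (c - 2*lam*r)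
        = ∫ r in (0:ℝ)..m, Real.exp (c - 2*lam*r) := by
      rw [intervalIntegral.integral_of_le (le_of_lt hm0), ← integral_Ioc_eq_integral_Ioo]
    rw [h1]
    have hderiv : ∀ r ∈ Set.uIcc (0:ℝ) m, HasDerivAt
        (fun r => -(2*lam)⁻¹ * Real.exp (c - 2*lam*r)) (Real.exp (c - 2*lam*r)) r := by
      intro r _
      have h2 : HasDerivAt (fun r : ℝ => c - 2*lam*r) (-(2*lam)) r := by
        simpa using ((hasDerivAt_id r).const_mul (2*lam)).const_sub c
      have h3 := (h2.exp).const_mul (-(2*lam)⁻¹)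
      refine h3.congr_deriv ?_
      have hne : (2*lam) ≠ 0 := by positivity
      rw [mul_comm (Real.exp _), ← mul_assoc, neg_mul_neg, inv_mul_cancel₀ hne, one_mul]
    rw [intervalIntegral.integral_eq_sub_of_hasDerivAt hderiv (Continuous.intervalIntegrable (by fun_prop) 0 m)]
    field_simp
    ring
  rw [hJ]
  have harith : 2 * lam * ((Real.exp c - Real.exp (c - 2*lam*m)) / (2*lam))
      = Real.exp c - Real.exp (c - 2*lam*m) := by
    field_simp
  rw [← ENNReal.ofReal_mul (le_of_lt (Real.exp_pos _)), ← Real.exp_add,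
    ← ENNReal.ofReal_mul (show (0:ℝ) ≤ 2*lam by positivity), harith,
    ← ENNReal.ofReal_add (le_of_lt (Real.exp_pos _))
      (sub_nonneg.2 (Real.exp_le_exp.2 (by nlinarith)))]
  have : lam * x + lam * y = c := by rw [hc]; ring
  rw [this]
  congr 1
  ring

def eE (lam z : ℝ) : ENNReal := ENNReal.ofReal (Real.exp (lam * z))
def FE (f : ℝ → ℝ) (x : ℝ) : ENNReal := ENNReal.ofReal (f x)
def AE (lam : ℝ) (f : ℝ → ℝ) (r : ℝ) : ENNReal :=
  ∫⁻ u in Set.Ioi (0:ℝ), eE lam u * FE f (u + r)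
def DE (lam x y : ℝ) : ENNReal :=
  ENNReal.ofReal (Real.exp (lam * (x + y) - 2 * lam * (min x y)))
def JE (lam x y : ℝ) : ENNReal :=
  ∫⁻ r in Set.Ioo 0 (min x y), eE lam (x - r) * eE lam (y - r)

lemma eE_meas (lam : ℝ) : Measurable (eE lam) :=
  ENNReal.measurable_ofReal.comp
    (Real.continuous_exp.measurable.comp (measurable_const.mul measurable_id))

lemma eE_ne_top (lam z : ℝ) : eE lam z ≠ ⊤ := ENNReal.ofReal_ne_top

lemma FE_ne_top (f : ℝ → ℝ) (z : ℝ) : FE f z ≠ ⊤ := ENNReal.ofReal_ne_top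

lemma eE_add (lam p q : ℝ) : eE lam (p + q) = eE lam p * eE lam q := by
  simp only [eE]
  rw [mul_add, Real.exp_add, ENNReal.ofReal_mul (le_of_lt (Real.exp_pos _))]

lemma FE_meas {f : ℝ → ℝ} (hf : Continuous f) : Measurable (FE f) :=
  ENNReal.measurable_ofReal.comp hf.measurable

lemma AE_shift (lam : ℝ) (f : ℝ → ℝ) (r : ℝ) :
    ∫⁻ x in Set.Ioi r, eE lam (x - r) * FE f x = AE lam f r := by
  rw [lint_Ioi_shift r (fun x => eE lam (x - r) * FE f x)]
  simp only [add_sub_cancel_right, AE]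

lemma AE_zero (lam : ℝ) (f : ℝ → ℝ) :
    AE lam f 0 = ∫⁻ u in Set.Ioi (0:ℝ), eE lam u * FE f u := by
  simp only [AE, add_zero]

lemma eE_split (lam : ℝ) (hlam : 0 < lam) (x y : ℝ) (hx : 0 < x) (hy : 0 < y) :
    eE lam x * eE lam y = DE lam x y + ENNReal.ofReal (2 * lam) * JE lam x y := by
  simpa only [eE, DE, JE] using exp_split lam hlam x y hx hy

set_option maxHeartbeats 1000000 in
lemma key (lam : ℝ) (hlam : 0 < lam) (f g : ℝ → ℝ) (hf : Continuous f) (hg : Continuous g)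
    (hf0 : ∀ x, 0 ≤ f x) (hg0 : ∀ x, 0 ≤ g x) :
    (∫⁻ v in Set.Ioi (0:ℝ), ENNReal.ofReal (Real.exp (lam * v)) *
        ∫⁻ u in Set.Ioo (0:ℝ) v, ENNReal.ofReal (f (v - u) * g u))
      = (∫⁻ v in Set.Ioi (0:ℝ), ENNReal.ofReal (Real.exp (lam * v)) *
            ∫⁻ r in Set.Ioi (0:ℝ), ENNReal.ofReal (f r * g (v + r)))
        + (∫⁻ u in Set.Ioi (0:ℝ), ENNReal.ofReal (Real.exp (lam * u)) *
            ∫⁻ r in Set.Ioi (0:ℝ), ENNReal.ofReal (f (u + r) * g r))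
        + ENNReal.ofReal (2 * lam) *
            ∫⁻ u in Set.Ioi (0:ℝ), ∫⁻ v in Set.Ioi (0:ℝ),
              ENNReal.ofReal (Real.exp (lam * (u + v))) *
                ∫⁻ r in Set.Ioi (0:ℝ), ENNReal.ofReal (f (u + r) * g (v + r)) := by
  have hem : Measurable (eE lam) := eE_meas lam
  have hFm : Measurable (FE f) := FE_meas hf
  have hGm : Measurable (FE g) := FE_meas hg
  have heT : ∀ z, eE lam z ≠ ⊤ := eE_ne_top lam
  have hFT : ∀ z, FE f z ≠ ⊤ := FE_ne_top f
  have hGT : ∀ z, FE g z ≠ ⊤ := FE_ne_top g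
  have hee : ∀ p q : ℝ, eE lam (p + q) = eE lam p * eE lam q := eE_add lam
  have hofmul : ∀ x y : ℝ, ENNReal.ofReal (f x * g y) = FE f x * FE g y := fun x y => by
    simp only [FE]; exact ENNReal.ofReal_mul (hf0 x)
  -- Claim I
  have claimI : (∫⁻ v in Set.Ioi (0:ℝ), eE lam v *
        ∫⁻ u in Set.Ioo (0:ℝ) v, FE f (v - u) * FE g u)
      = AE lam f 0 * AE lam g 0 := by
    have m1 : Measurable (Function.uncurry fun u v : ℝ =>
        eE lam v * (FE f (v - u) * FE g u)) :=
      (hem.comp measurable_snd).mul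
        ((hFm.comp (measurable_snd.sub measurable_fst)).mul (hGm.comp measurable_fst))
    have step1 : ∀ v : ℝ, eE lam v * ∫⁻ u in Set.Ioo (0:ℝ) v, FE f (v - u) * FE g u
        = ∫⁻ u in Set.Ioo (0:ℝ) v, eE lam v * (FE f (v - u) * FE g u) := fun v =>
      (lintegral_const_mul' _ _ (heT v)).symm
    simp only [step1]
    rw [tri_swap (fun u v => eE lam v * (FE f (v - u) * FE g u)) m1]
    have step2 : ∀ u : ℝ, (∫⁻ v in Set.Ioi u, eE lam v * (FE f (v - u) * FE g u))
        = (eE lam u * FE g u) * AE lam f 0 := by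
      intro u
      rw [lint_Ioi_shift u (fun v => eE lam v * (FE f (v - u) * FE g u))]
      simp only [add_sub_cancel_right]
      have h : ∀ w : ℝ, eE lam (w + u) * (FE f w * FE g u)
          = (eE lam u * FE g u) * (eE lam w * FE f w) := by
        intro w; rw [hee]; ring
      simp only [h]
      rw [lintegral_const_mul' _ _ (ENNReal.mul_ne_top (heT u) (hGT u)), ← AE_zero lam f]
    simp only [step2]
    rw [lintegral_mul_const (f := fun u => eE lam u * FE g u) _ (hem.mul hGm), ← AE_zero lam g, mul_comm]
  -- Claim II
  have claimII : (∫⁻ v in Set.Ioi (0:ℝ), eE lam v *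
        ∫⁻ r in Set.Ioi (0:ℝ), FE f r * FE g (v + r))
      = ∫⁻ x in Set.Ioi (0:ℝ), FE f x * AE lam g x := by
    have m2 : Measurable (Function.uncurry fun v r : ℝ =>
        eE lam v * (FE f r * FE g (v + r))) :=
      (hem.comp measurable_fst).mul
        ((hFm.comp measurable_snd).mul (hGm.comp (measurable_fst.add measurable_snd)))
    have step1 : ∀ v : ℝ, eE lam v * ∫⁻ r in Set.Ioi (0:ℝ), FE f r * FE g (v + r)
        = ∫⁻ r in Set.Ioi (0:ℝ), eE lam v * (FE f r * FE g (v + r)) := fun v =>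
      (lintegral_const_mul' _ _ (heT v)).symm
    simp only [step1]
    rw [prod_swap' (fun v r => eE lam v * (FE f r * FE g (v + r))) m2]
    refine lintegral_congr fun r => ?_
    have h : ∀ v : ℝ, eE lam v * (FE f r * FE g (v + r))
        = FE f r * (eE lam v * FE g (v + r)) := fun v => by ring
    simp only [h]
    rw [lintegral_const_mul' _ _ (hFT r)]
    rfl
  -- Claim III
  have claimIII : (∫⁻ u in Set.Ioi (0:ℝ), eE lam u *
        ∫⁻ r in Set.Ioi (0:ℝ), FE f (u + r) * FE g r)
      = ∫⁻ y in Set.Ioi (0:ℝ), FE g y * AE lam f y := by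
    have m3 : Measurable (Function.uncurry fun u r : ℝ =>
        eE lam u * (FE f (u + r) * FE g r)) :=
      (hem.comp measurable_fst).mul
        ((hFm.comp (measurable_fst.add measurable_snd)).mul (hGm.comp measurable_snd))
    have step1 : ∀ u : ℝ, eE lam u * ∫⁻ r in Set.Ioi (0:ℝ), FE f (u + r) * FE g r
        = ∫⁻ r in Set.Ioi (0:ℝ), eE lam u * (FE f (u + r) * FE g r) := fun u =>
      (lintegral_const_mul' _ _ (heT u)).symm
    simp only [step1]
    rw [prod_swap' (fun u r => eE lam u * (FE f (u + r) * FE g r)) m3]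
    refine lintegral_congr fun r => ?_
    have h : ∀ u : ℝ, eE lam u * (FE f (u + r) * FE g r)
        = FE g r * (eE lam u * FE f (u + r)) := fun u => by ring
    simp only [h]
    rw [lintegral_const_mul' _ _ (hGT r)]
    rfl
  -- Claim IV
  have claimIV : (∫⁻ u in Set.Ioi (0:ℝ), ∫⁻ v in Set.Ioi (0:ℝ),
        eE lam (u + v) * ∫⁻ r in Set.Ioi (0:ℝ), FE f (u + r) * FE g (v + r))
      = ∫⁻ r in Set.Ioi (0:ℝ), AE lam f r * AE lam g r := by
    have s1 : ∀ u v : ℝ, eE lam (u + v) * ∫⁻ r in Set.Ioi (0:ℝ), FE f (u + r) * FE g (v + r)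
        = ∫⁻ r in Set.Ioi (0:ℝ), (eE lam u * FE f (u + r)) * (eE lam v * FE g (v + r)) := by
      intro u v
      rw [hee u v, ← lintegral_const_mul' _ _ (ENNReal.mul_ne_top (heT u) (heT v))]
      exact lintegral_congr fun r => by ring
    simp only [s1]
    have s2 : ∀ u : ℝ, (∫⁻ v in Set.Ioi (0:ℝ), ∫⁻ r in Set.Ioi (0:ℝ),
          (eE lam u * FE f (u + r)) * (eE lam v * FE g (v + r)))
        = ∫⁻ r in Set.Ioi (0:ℝ), ∫⁻ v in Set.Ioi (0:ℝ),
          (eE lam u * FE f (u + r)) * (eE lam v * FE g (v + r)) := by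
      intro u
      exact prod_swap' (fun v r => (eE lam u * FE f (u + r)) * (eE lam v * FE g (v + r)))
        (((hFm.comp (measurable_const.add measurable_snd)).const_mul (eE lam u)).mul
          ((hem.comp measurable_fst).mul (hGm.comp (measurable_fst.add measurable_snd))))
    simp only [s2]
    have mBig : Measurable (Function.uncurry fun u r : ℝ => ∫⁻ v in Set.Ioi (0:ℝ),
        (eE lam u * FE f (u + r)) * (eE lam v * FE g (v + r))) := by
      have h : Measurable (fun q : (ℝ × ℝ) × ℝ =>
          (eE lam q.1.1 * FE f (q.1.1 + q.1.2)) * (eE lam q.2 * FE g (q.2 + q.1.2))) :=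
        ((hem.comp (measurable_fst.comp measurable_fst)).mul
          (hFm.comp ((measurable_fst.comp measurable_fst).add
            (measurable_snd.comp measurable_fst)))).mul
          ((hem.comp measurable_snd).mul
            (hGm.comp (measurable_snd.add (measurable_snd.comp measurable_fst))))
      exact h.lintegral_prod_right'
    rw [prod_swap' (fun u r => ∫⁻ v in Set.Ioi (0:ℝ),
      (eE lam u * FE f (u + r)) * (eE lam v * FE g (v + r))) mBig]
    refine lintegral_congr fun r => ?_
    have inner : ∀ u : ℝ, (∫⁻ v in Set.Ioi (0:ℝ),
          (eE lam u * FE f (u + r)) * (eE lam v * FE g (v + r)))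
        = (eE lam u * FE f (u + r)) * AE lam g r := fun u =>
      lintegral_const_mul' _ _ (ENNReal.mul_ne_top (heT u) (hFT _))
    simp only [inner]
    have hm : Measurable (fun x : ℝ => eE lam x * FE f (x + r)) :=
      hem.mul (hFm.comp (measurable_id.add_const r))
    rw [lintegral_mul_const _ hm]
    rfl
  -- Claim V
  have claimV : AE lam f 0 * AE lam g 0
      = (∫⁻ x in Set.Ioi (0:ℝ), FE f x * AE lam g x)
        + (∫⁻ y in Set.Ioi (0:ℝ), FE g y * AE lam f y)
        + ENNReal.ofReal (2 * lam) * ∫⁻ r in Set.Ioi (0:ℝ), AE lam f r * AE lam g r := by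
    have expand : AE lam f 0 * AE lam g 0
        = ∫⁻ x in Set.Ioi (0:ℝ), ∫⁻ y in Set.Ioi (0:ℝ),
            (eE lam x * eE lam y) * (FE f x * FE g y) :=
      calc AE lam f 0 * AE lam g 0
          = ∫⁻ x in Set.Ioi (0:ℝ), (eE lam x * FE f x) * AE lam g 0 := by
            rw [AE_zero lam f]; exact (lintegral_mul_const _ (hem.mul hFm)).symm
        _ = ∫⁻ x in Set.Ioi (0:ℝ), ∫⁻ y in Set.Ioi (0:ℝ),
              (eE lam x * FE f x) * (eE lam y * FE g y) :=
            lintegral_congr fun x => by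
              rw [AE_zero lam g,
                ← lintegral_const_mul' _ _ (ENNReal.mul_ne_top (heT x) (hFT x))]
        _ = _ := lintegral_congr fun x => lintegral_congr fun y => by ring
    rw [expand]
    have splitint : (∫⁻ x in Set.Ioi (0:ℝ), ∫⁻ y in Set.Ioi (0:ℝ),
          (eE lam x * eE lam y) * (FE f x * FE g y))
        = ∫⁻ x in Set.Ioi (0:ℝ), ∫⁻ y in Set.Ioi (0:ℝ),
            (DE lam x y * (FE f x * FE g y)
              + (ENNReal.ofReal (2 * lam) * JE lam x y) * (FE f x * FE g y)) := by
      refine setLIntegral_congr_fun measurableSet_Ioi (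
        fun x hx => ?_)
      refine setLIntegral_congr_fun measurableSet_Ioi (
        fun y hy => ?_)
      rw [eE_split lam hlam x y hx hy, add_mul, mul_assoc]
    rw [splitint]
    have hDm : Measurable (fun p : ℝ × ℝ => DE lam p.1 p.2) := by
      simp only [DE]
      apply ENNReal.measurable_ofReal.comp
      apply Measurable.comp Real.continuous_exp.measurable
      exact ((measurable_const.mul (measurable_fst.add measurable_snd)).sub
        (measurable_const.mul (measurable_fst.min measurable_snd)))
    have hDFGm : Measurable (fun p : ℝ × ℝ => DE lam p.1 p.2 * (FE f p.1 * FE g p.2)) :=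
      hDm.mul ((hFm.comp measurable_fst).mul (hGm.comp measurable_snd))
    have add_inner : ∀ x : ℝ, (∫⁻ y in Set.Ioi (0:ℝ),
          (DE lam x y * (FE f x * FE g y)
            + (ENNReal.ofReal (2 * lam) * JE lam x y) * (FE f x * FE g y)))
        = (∫⁻ y in Set.Ioi (0:ℝ), DE lam x y * (FE f x * FE g y))
          + ∫⁻ y in Set.Ioi (0:ℝ),
              (ENNReal.ofReal (2 * lam) * JE lam x y) * (FE f x * FE g y) := fun x =>
      lintegral_add_left (hDFGm.comp measurable_prodMk_left) _
    simp only [add_inner]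
    have hS1meas : Measurable (fun x => ∫⁻ y in Set.Ioi (0:ℝ),
        DE lam x y * (FE f x * FE g y)) := hDFGm.lintegral_prod_right'
    rw [lintegral_add_left hS1meas]
    -- evaluate S1
    have hS1 : (∫⁻ x in Set.Ioi (0:ℝ), ∫⁻ y in Set.Ioi (0:ℝ),
          DE lam x y * (FE f x * FE g y))
        = (∫⁻ x in Set.Ioi (0:ℝ), FE f x * AE lam g x)
          + ∫⁻ y in Set.Ioi (0:ℝ), FE g y * AE lam f y := by
      have split_y : ∀ x : ℝ, x ∈ Set.Ioi (0:ℝ) →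
          (∫⁻ y in Set.Ioi (0:ℝ), DE lam x y * (FE f x * FE g y))
          = (∫⁻ y in Set.Ioo (0:ℝ) x, eE lam (x - y) * (FE f x * FE g y))
            + ∫⁻ y in Set.Ioi x, eE lam (y - x) * (FE f x * FE g y) := by
        intro x hx
        rw [← Set.Ioo_union_Ici_eq_Ioi (Set.mem_Ioi.1 hx),
          lintegral_union measurableSet_Ici
            (Set.disjoint_left.mpr fun y hy hy' => absurd hy.2 (not_lt.2 hy'))]
        congr 1
        · refine setLIntegral_congr_fun measurableSet_Ioo
            (fun y hy => ?_)
          have hmin : lam * (x + y) - 2 * lam * (min x y) = lam * (x - y) := by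
            rw [min_eq_right (le_of_lt hy.2)]; ring
          simp only [DE, eE]
          rw [hmin]
        · rw [setLIntegral_congr (Filter.EventuallyEq.symm Ioi_ae_eq_Ici)]
          refine setLIntegral_congr_fun measurableSet_Ioi
            (fun y hy => ?_)
          have hmin : lam * (x + y) - 2 * lam * (min x y) = lam * (y - x) := by
            rw [min_eq_left (le_of_lt (Set.mem_Ioi.1 hy))]; ring
          simp only [DE, eE]
          rw [hmin]
      rw [setLIntegral_congr_fun measurableSet_Ioi split_y]
      have mU2 : Measurable (fun x => ∫⁻ y in Set.Ioo (0:ℝ) x,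
          eE lam (x - y) * (FE f x * FE g y)) := by
        apply meas_param_set (α := ℝ)
        · exact (hem.comp (measurable_fst.sub measurable_snd)).mul
            ((hFm.comp measurable_fst).mul (hGm.comp measurable_snd))
        · have h : {p : ℝ × ℝ | p.2 ∈ Set.Ioo (0:ℝ) p.1}
              = {p : ℝ × ℝ | 0 < p.2} ∩ {p : ℝ × ℝ | p.2 < p.1} := by
            ext p; simp [Set.mem_Ioo]
          rw [h]
          exact (measurableSet_lt measurable_const measurable_snd).inter
            (measurableSet_lt measurable_snd measurable_fst)
      rw [lintegral_add_left mU2]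
      have hU2 : (∫⁻ x in Set.Ioi (0:ℝ), ∫⁻ y in Set.Ioo (0:ℝ) x,
            eE lam (x - y) * (FE f x * FE g y))
          = ∫⁻ y in Set.Ioi (0:ℝ), FE g y * AE lam f y := by
        rw [tri_swap (fun y x => eE lam (x - y) * (FE f x * FE g y))
          ((hem.comp (measurable_snd.sub measurable_fst)).mul
            ((hFm.comp measurable_snd).mul (hGm.comp measurable_fst)))]
        refine lintegral_congr fun y => ?_
        have h : ∀ x : ℝ, eE lam (x - y) * (FE f x * FE g y)
            = FE g y * (eE lam (x - y) * FE f x) := fun x => by ring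
        simp only [h]
        rw [lintegral_const_mul' _ _ (hGT y), AE_shift lam f y]
      have hU1 : (∫⁻ x in Set.Ioi (0:ℝ), ∫⁻ y in Set.Ioi x,
            eE lam (y - x) * (FE f x * FE g y))
          = ∫⁻ x in Set.Ioi (0:ℝ), FE f x * AE lam g x := by
        refine lintegral_congr fun x => ?_
        have h : ∀ y : ℝ, eE lam (y - x) * (FE f x * FE g y)
            = FE f x * (eE lam (y - x) * FE g y) := fun y => by ring
        simp only [h]
        rw [lintegral_const_mul' _ _ (hFT x), AE_shift lam g x]
      rw [hU2, hU1, add_comm]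
    -- evaluate S2
    have hS2 : (∫⁻ x in Set.Ioi (0:ℝ), ∫⁻ y in Set.Ioi (0:ℝ),
          (ENNReal.ofReal (2 * lam) * JE lam x y) * (FE f x * FE g y))
        = ENNReal.ofReal (2 * lam) * ∫⁻ r in Set.Ioi (0:ℝ), AE lam f r * AE lam g r := by
      have pull : ∀ x y : ℝ, (ENNReal.ofReal (2 * lam) * JE lam x y) * (FE f x * FE g y)
          = ENNReal.ofReal (2 * lam) * ∫⁻ r in Set.Ioo 0 (min x y),
              (eE lam (x - r) * FE f x) * (eE lam (y - r) * FE g y) := by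
        intro x y
        rw [mul_assoc]
        congr 1
        simp only [JE]
        have hm2 : Measurable (fun r : ℝ => eE lam (x - r) * eE lam (y - r)) :=
          (hem.comp (measurable_const.sub measurable_id)).mul
            (hem.comp (measurable_const.sub measurable_id))
        rw [← lintegral_mul_const _ hm2]
        exact lintegral_congr fun r => by ring
      simp only [pull]
      have pullc1 : ∀ x : ℝ, (∫⁻ y in Set.Ioi (0:ℝ),
            ENNReal.ofReal (2 * lam) * ∫⁻ r in Set.Ioo 0 (min x y),
              (eE lam (x - r) * FE f x) * (eE lam (y - r) * FE g y))
          = ENNReal.ofReal (2 * lam) * ∫⁻ y in Set.Ioi (0:ℝ),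
              ∫⁻ r in Set.Ioo 0 (min x y),
                (eE lam (x - r) * FE f x) * (eE lam (y - r) * FE g y) := fun x =>
        lintegral_const_mul' _ _ ENNReal.ofReal_ne_top
      simp only [pullc1]
      rw [lintegral_const_mul' _ _ ENNReal.ofReal_ne_top]
      congr 1
      have sw1 : ∀ x : ℝ, (∫⁻ y in Set.Ioi (0:ℝ),
            ∫⁻ r in Set.Ioo 0 (min x y),
              (eE lam (x - r) * FE f x) * (eE lam (y - r) * FE g y))
          = ∫⁻ r in Set.Ioo (0:ℝ) x, ∫⁻ y in Set.Ioi r,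
              (eE lam (x - r) * FE f x) * (eE lam (y - r) * FE g y) := by
        intro x
        exact min_swap x (fun r y => (eE lam (x - r) * FE f x) * (eE lam (y - r) * FE g y))
          (((hem.comp (measurable_const.sub measurable_fst)).mul measurable_const).mul
            ((hem.comp (measurable_snd.sub measurable_fst)).mul (hGm.comp measurable_snd)))
      simp only [sw1]
      have mInner : Measurable (Function.uncurry fun r x : ℝ => ∫⁻ y in Set.Ioi r,
          (eE lam (x - r) * FE f x) * (eE lam (y - r) * FE g y)) := by
        apply meas_param_set (α := ℝ × ℝ)
          (fun p y => (eE lam (p.2 - p.1) * FE f p.2) * (eE lam (y - p.1) * FE g y))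
          (((hem.comp ((measurable_snd.comp measurable_fst).sub
              (measurable_fst.comp measurable_fst))).mul
            (hFm.comp (measurable_snd.comp measurable_fst))).mul
            ((hem.comp (measurable_snd.sub (measurable_fst.comp measurable_fst))).mul
              (hGm.comp measurable_snd)))
          (fun p => Set.Ioi p.1)
        exact measurableSet_lt (measurable_fst.comp measurable_fst) measurable_snd
      rw [tri_swap (fun r x => ∫⁻ y in Set.Ioi r,
        (eE lam (x - r) * FE f x) * (eE lam (y - r) * FE g y)) mInner]
      refine lintegral_congr fun r => ?_
      have hin : ∀ x : ℝ, (∫⁻ y in Set.Ioi r,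
            (eE lam (x - r) * FE f x) * (eE lam (y - r) * FE g y))
          = (eE lam (x - r) * FE f x) * AE lam g r := by
        intro x
        rw [lintegral_const_mul' _ _ (ENNReal.mul_ne_top (heT _) (hFT _)), AE_shift lam g r]
      simp only [hin]
      have hm3 : Measurable (fun x : ℝ => eE lam (x - r) * FE f x) :=
        (hem.comp (measurable_id.sub_const r)).mul hFm
      rw [lintegral_mul_const _ hm3, AE_shift lam f r]
    rw [hS1, hS2, add_assoc]
  -- conclude
  calc (∫⁻ v in Set.Ioi (0:ℝ), ENNReal.ofReal (Real.exp (lam * v)) *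
        ∫⁻ u in Set.Ioo (0:ℝ) v, ENNReal.ofReal (f (v - u) * g u))
      = ∫⁻ v in Set.Ioi (0:ℝ), eE lam v *
          ∫⁻ u in Set.Ioo (0:ℝ) v, FE f (v - u) * FE g u := by
        simp only [hofmul]; rfl
    _ = AE lam f 0 * AE lam g 0 := claimI
    _ = (∫⁻ x in Set.Ioi (0:ℝ), FE f x * AE lam g x)
        + (∫⁻ y in Set.Ioi (0:ℝ), FE g y * AE lam f y)
        + ENNReal.ofReal (2 * lam) * ∫⁻ r in Set.Ioi (0:ℝ), AE lam f r * AE lam g r :=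
        claimV
    _ = _ := by
        rw [← claimII, ← claimIII, ← claimIV]
        simp only [hofmul]; rfl

theorem weighted_volterra_decomposition (s t a b lam : ℝ)
    (hs : 0 < s) (ht : 0 < t) (ha : 0 ≤ a) (hb : 0 ≤ b) (hlam : 0 < lam) :
    (∫⁻ v in Set.Ioi (0 : ℝ), ENNReal.ofReal (Real.exp (lam * v)) *
        ∫⁻ u in Set.Ioo (0 : ℝ) v, ENNReal.ofReal (heatR s (v + a - u) * heatR t (u + b)))
      = (∫⁻ v in Set.Ioi (0 : ℝ), ENNReal.ofReal (Real.exp (lam * v)) *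
            ∫⁻ r in Set.Ioi (0 : ℝ), ENNReal.ofReal (heatR s (a + r) * heatR t (v + r + b)))
        + (∫⁻ u in Set.Ioi (0 : ℝ), ENNReal.ofReal (Real.exp (lam * u)) *
            ∫⁻ r in Set.Ioi (0 : ℝ), ENNReal.ofReal (heatR s (u + a + r) * heatR t (r + b)))
        + ENNReal.ofReal (2 * lam) *
            ∫⁻ u in Set.Ioi (0 : ℝ), ∫⁻ v in Set.Ioi (0 : ℝ),
              ENNReal.ofReal (Real.exp (lam * (u + v))) *
                ∫⁻ r in Set.Ioi (0 : ℝ),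
                  ENNReal.ofReal (heatR s (u + a + r) * heatR t (v + r + b)) := by
  have hfc : Continuous (fun x : ℝ => heatR s (x + a)) := by
    unfold heatR; fun_prop
  have hgc : Continuous (fun y : ℝ => heatR t (y + b)) := by
    unfold heatR; fun_prop
  have hbase_s : (0:ℝ) ≤ 4 * π * s :=
    mul_nonneg (mul_nonneg (by norm_num) Real.pi_pos.le) hs.le
  have hbase_t : (0:ℝ) ≤ 4 * π * t :=
    mul_nonneg (mul_nonneg (by norm_num) Real.pi_pos.le) ht.le
  have hf0 : ∀ x : ℝ, 0 ≤ heatR s (x + a) := fun x =>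
    mul_nonneg (Real.rpow_nonneg hbase_s _) (Real.exp_pos _).le
  have hg0 : ∀ y : ℝ, 0 ≤ heatR t (y + b) := fun y =>
    mul_nonneg (Real.rpow_nonneg hbase_t _) (Real.exp_pos _).le
  have h := key lam hlam (fun x => heatR s (x + a)) (fun y => heatR t (y + b))
    hfc hgc hf0 hg0
  have e1 : ∀ v u : ℝ, v + a - u = v - u + a := fun _ _ => by ring
  have e2 : ∀ r : ℝ, a + r = r + a := fun _ => by ring
  have e3 : ∀ u r : ℝ, u + a + r = u + r + a := fun _ _ => by ring
  simp only [e1, e2, e3]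
  exact h

end
end

section
/- For every t > 0 and every x ∈ ℝ³ \ {0}: ∫_{ℝ³} (1/|y|) · P_t(|x|+|y|) dy = (πt)^{-1/2} e^{−|x|²/(4t)} − (|x|/(2t)) · erfc(|x|/(2√t)). -/
open MeasureTheory Real
open scoped Classical

noncomputable section

open Set Filter

lemma shift_Ioi (g : ℝ → ℝ) (a : ℝ) :
    ∫ y in Set.Ioi (0:ℝ), g (y + a) = ∫ s in Set.Ioi a, g s := by
  rw [← integral_indicator measurableSet_Ioi, ← integral_indicator measurableSet_Ioi,
    ← integral_add_right_eq_self (fun s => (Ioi a).indicator g s) a]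
  congr 1
  ext y
  by_cases h : 0 < y <;> simp [indicator, h, lt_add_iff_pos_left]

lemma I1_eq (b a : ℝ) (hb : 0 < b) :
    ∫ s in Set.Ioi a, s * Real.exp (-b * s ^ 2) = (2 * b)⁻¹ * Real.exp (-b * a ^ 2) := by
  have hF : ∀ s : ℝ, HasDerivAt (fun s : ℝ => -(2 * b)⁻¹ * Real.exp (-b * s ^ 2))
      (s * Real.exp (-b * s ^ 2)) s := by
    intro s
    have h1 : HasDerivAt (fun s : ℝ => -b * s ^ 2) (-b * (2 * s)) s := by
      simpa using ((hasDerivAt_pow 2 s).const_mul (-b))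
    have := ((Real.hasDerivAt_exp (-b * s ^ 2)).comp s h1).const_mul (-(2 * b)⁻¹)
    refine this.congr_deriv ?_
    have hb0 : (2 * b)⁻¹ * (2 * b) = 1 := inv_mul_cancel₀ (by positivity)
    linear_combination (s * Real.exp (-b * s ^ 2)) * hb0
  have htend : Tendsto (fun s : ℝ => -(2 * b)⁻¹ * Real.exp (-b * s ^ 2)) atTop (nhds 0) := by
    rw [show (0:ℝ) = -(2*b)⁻¹ * 0 by ring]
    refine Tendsto.const_mul _ (Real.tendsto_exp_atBot.comp ?_)
    have : Tendsto (fun s : ℝ => -(s ^ 2)) atTop atBot :=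
      tendsto_neg_atBot_iff.mpr (tendsto_pow_atTop (by norm_num))
    simpa [mul_neg, neg_mul] using this.const_mul_atBot hb
  have hint : IntegrableOn (fun s : ℝ => s * Real.exp (-b * s ^ 2)) (Ioi a) :=
    (integrable_mul_exp_neg_mul_sq hb).integrableOn
  rw [integral_Ioi_of_hasDerivAt_of_tendsto' (fun s _ => hF s) hint htend]
  ring

theorem radial_heat_integral (t : ℝ) (ht : 0 < t) (x : E3) (hx : x ≠ 0) :
    ∫ y : E3, 1 / ‖y‖ * heatR t (‖x‖ + ‖y‖)
      = (Real.sqrt (π * t))⁻¹ * Real.exp (-‖x‖ ^ 2 / (4 * t))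
        - ‖x‖ / (2 * t) * erfc (‖x‖ / (2 * Real.sqrt t)) := by
  set a : ℝ := ‖x‖ with ha_def
  have ha : 0 < a := norm_pos_iff.mpr hx
  set b : ℝ := (4 * t)⁻¹ with hb_def
  have hb : 0 < b := by positivity
  set C : ℝ := (4 * π * t) ^ (-(3 : ℝ) / 2) with hC_def
  have hπ : (0:ℝ) < π := Real.pi_pos
  have hst : 0 < Real.sqrt t := Real.sqrt_pos.mpr ht
  have hsπ : 0 < Real.sqrt π := Real.sqrt_pos.mpr hπ
  have hsπt : 0 < Real.sqrt (π * t) := Real.sqrt_pos.mpr (by positivity)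
  -- Step 1: radial reduction
  have hdim : Module.finrank ℝ E3 = 3 := finrank_euclideanSpace_fin
  have hrad := MeasureTheory.integral_fun_norm_addHaar (volume : Measure E3)
    (fun r : ℝ => 1 / r * heatR t (a + r))
  rw [hdim] at hrad
  -- Step 2: volume of the unit ball
  have hvol : (volume (Metric.ball (0:E3) 1)).toReal = 4 / 3 * π := by
    rw [EuclideanSpace.volume_ball]
    have hcard : (Fintype.card (Fin 3) : ℝ) = 3 := by simp
    rw [Fintype.card_fin]
    have hG : Real.Gamma ((3:ℝ) / 2 + 1) = 3 / 4 * Real.sqrt π := by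
      rw [Real.Gamma_add_one (by norm_num),
        show (3:ℝ)/2 = 1/2 + 1 by norm_num,
        Real.Gamma_add_one (by norm_num), Real.Gamma_one_half_eq]
      ring
    rw [show ((3:ℕ) : ℝ) = (3:ℝ) by norm_num] at *
    rw [hG]
    rw [ENNReal.toReal_mul, ENNReal.toReal_pow, ENNReal.toReal_ofReal (by norm_num),
      ENNReal.toReal_ofReal (by positivity)]
    have hs3 : Real.sqrt π ^ 3 = π * Real.sqrt π := by
      rw [pow_succ, Real.sq_sqrt hπ.le]
    rw [hs3]
    field_simp
  set J : ℝ := ∫ u in Set.Ioi (a / (2 * Real.sqrt t)), Real.exp (-u ^ 2) with hJ_def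
  -- Step 3: rewrite the inner 1D integrand
  have hstep1 : (∫ y in Ioi (0:ℝ), y ^ (3 - 1) • (1 / y * heatR t (a + y)))
      = ∫ y in Ioi (0:ℝ),
          C * ((y + a) * Real.exp (-b * (y + a) ^ 2) - a * Real.exp (-b * (y + a) ^ 2)) := by
    refine setIntegral_congr_fun measurableSet_Ioi (fun y hy => ?_)
    have hy0 : (0:ℝ) < y := hy
    simp only [smul_eq_mul, heatR]
    rw [show -(a + y) ^ 2 / (4 * t) = -b * (y + a) ^ 2 by rw [hb_def]; field_simp; ring]
    field_simp
    rw [hC_def, neg_div]; ring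
  have hi1 : Integrable (fun y : ℝ => (y + a) * Real.exp (-b * (y + a) ^ 2)) :=
    (integrable_mul_exp_neg_mul_sq hb).comp_add_right a
  have hi2 : Integrable (fun y : ℝ => Real.exp (-b * (y + a) ^ 2)) :=
    (integrable_exp_neg_mul_sq hb).comp_add_right a
  -- Step 4: the two 1D integrals
  have hI1 : (∫ y in Ioi (0:ℝ), (y + a) * Real.exp (-b * (y + a) ^ 2))
      = (2 * b)⁻¹ * Real.exp (-b * a ^ 2) := by
    rw [shift_Ioi (fun s => s * Real.exp (-b * s ^ 2)) a]
    exact I1_eq b a hb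
  have hI2 : (∫ y in Ioi (0:ℝ), Real.exp (-b * (y + a) ^ 2)) = 2 * Real.sqrt t * J := by
    rw [shift_Ioi (fun s => Real.exp (-b * s ^ 2)) a]
    have h2 : (0:ℝ) < 2 * Real.sqrt t := by positivity
    have hcml := integral_comp_mul_left_Ioi (fun s => Real.exp (-b * s ^ 2))
      (a / (2 * Real.sqrt t)) h2
    rw [show 2 * Real.sqrt t * (a / (2 * Real.sqrt t)) = a by field_simp] at hcml
    have harg : ∀ u : ℝ, -b * (2 * Real.sqrt t * u) ^ 2 = -u ^ 2 := by
      intro u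
      have h4 : (2 * Real.sqrt t * u) ^ 2 = 4 * t * u ^ 2 := by
        rw [mul_pow, mul_pow, Real.sq_sqrt ht.le]; ring
      rw [h4, hb_def]; field_simp
    simp_rw [harg, smul_eq_mul] at hcml
    rw [hJ_def, hcml, ← mul_assoc, mul_inv_cancel₀ h2.ne', one_mul]
  -- Step 5: put everything together
  rw [hrad, measureReal_def, hvol, hstep1, integral_const_mul,
    integral_sub hi1.integrableOn ((hi2.const_mul a).integrableOn),
    integral_const_mul, hI1, hI2]
  have hC : C = (4 * π * t * (2 * (Real.sqrt π * Real.sqrt t)))⁻¹ := by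
    rw [hC_def, show (-(3:ℝ) / 2) = -((3:ℝ)/2) by norm_num,
      Real.rpow_neg (by positivity), show (3:ℝ)/2 = 1 + 1/2 by norm_num,
      Real.rpow_add (by positivity), Real.rpow_one, ← Real.sqrt_eq_rpow,
      show (4 * π * t) = (2 * (Real.sqrt π * Real.sqrt t)) ^ 2 by
        rw [mul_pow, mul_pow, Real.sq_sqrt hπ.le, Real.sq_sqrt ht.le]; ring,
      Real.sqrt_sq (by positivity)]
  rw [erfc, ← hJ_def, Real.sqrt_mul hπ.le t,
    show -a ^ 2 / (4 * t) = -b * a ^ 2 by rw [hb_def]; field_simp,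
    hC, hb_def]
  rw [nsmul_eq_mul, smul_eq_mul]
  field_simp
  ring

end
end

section
/- For all t, β > 0 and every x ∈ ℝ³ \ {0}: ∫₀^∞ e^{4πβu} · u · e^{−(|x|+u)²/(4t)} du = √(πt) · (8πβt − |x|) · e^{−4πβ|x| + 16π²β²t} · erfc(|x|/(2√t) − 4πβ√t) + 2t · e^{−|x|²/(4t)}. -/
open MeasureTheory Real
open scoped Classical

noncomputable section

section AuxLemmasForLaplaceGaussianMoment
open Set Filter

private lemma aux_shift_int (c : ℝ) (f : ℝ → ℝ) :
    ∫ u in Set.Ioi (0:ℝ), f (u + c) = ∫ u in Set.Ioi c, f u := by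
  have h := (measurePreserving_add_right (volume : Measure ℝ) c).setIntegral_preimage_emb
    (MeasurableEquiv.addRight c).measurableEmbedding f (Set.Ioi c)
  have hpre : ((· + c) : ℝ → ℝ) ⁻¹' Set.Ioi c = Set.Ioi 0 := by
    ext u; simp [Set.mem_Ioi]
  rw [hpre] at h
  exact h

private lemma gauss_tail (t c : ℝ) (ht : 0 < t) :
    ∫ u in Set.Ioi (0:ℝ), Real.exp (-(u + c) ^ 2 / (4 * t))
      = Real.sqrt (π * t) * erfc (c / (2 * Real.sqrt t)) := by
  have hst : 0 < Real.sqrt t := Real.sqrt_pos.mpr ht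
  rw [aux_shift_int c (fun u => Real.exp (-u ^ 2 / (4 * t)))]
  have hb : (0:ℝ) < 1 / (2 * Real.sqrt t) := by positivity
  have h4 : (2 * Real.sqrt t) ^ 2 = 4 * t := by
    rw [mul_pow, Real.sq_sqrt ht.le]; ring
  have h1 : ∀ u : ℝ, Real.exp (-u ^ 2 / (4 * t))
      = (fun v => Real.exp (-v ^ 2)) (u * (1 / (2 * Real.sqrt t))) := by
    intro u
    simp only
    congr 1
    rw [mul_one_div, div_pow, h4, neg_div]
  calc ∫ u in Set.Ioi c, Real.exp (-u ^ 2 / (4 * t))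
      = ∫ u in Set.Ioi c, (fun v => Real.exp (-v ^ 2)) (u * (1 / (2 * Real.sqrt t))) := by
        simp_rw [h1]
    _ = (1 / (2 * Real.sqrt t))⁻¹ • ∫ v in Set.Ioi (c * (1 / (2 * Real.sqrt t))), Real.exp (-v ^ 2) := by
        exact integral_comp_mul_right_Ioi (fun v => Real.exp (-v ^ 2)) c hb
    _ = Real.sqrt (π * t) * erfc (c / (2 * Real.sqrt t)) := by
        rw [erfc, smul_eq_mul, mul_one_div c]
        have hπ : 0 < Real.sqrt π := Real.sqrt_pos.mpr Real.pi_pos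
        rw [Real.sqrt_mul Real.pi_pos.le]
        field_simp

set_option maxHeartbeats 1600000 in
private lemma laplace_gaussian_moment_aux (t β : ℝ) (ht : 0 < t) (hβ : 0 < β) (r : ℝ) :
    ∫ u in Set.Ioi (0 : ℝ),
        Real.exp (4 * π * β * u) * u * Real.exp (-(r + u) ^ 2 / (4 * t))
      = Real.sqrt (π * t) * (8 * π * β * t - r)
            * Real.exp (-(4 * π * β * r) + 16 * π ^ 2 * β ^ 2 * t)
            * erfc (r / (2 * Real.sqrt t) - 4 * π * β * Real.sqrt t)
        + 2 * t * Real.exp (-r ^ 2 / (4 * t)) := by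
  obtain ⟨b, hbdef⟩ : ∃ b : ℝ, b = 4 * π * β := ⟨_, rfl⟩
  rw [← hbdef]
  have hb : 0 < b := by rw [hbdef]; have := Real.pi_pos; positivity
  obtain ⟨c, hcdef⟩ : ∃ c : ℝ, c = r - 2 * b * t := ⟨_, rfl⟩
  obtain ⟨K, hKdef⟩ : ∃ K : ℝ, K = -b * r + b ^ 2 * t := ⟨_, rfl⟩
  have ht' : (4 * t) ≠ 0 := by positivity
  -- pointwise rewriting of the integrand
  have hpt : ∀ u : ℝ, Real.exp (b * u) * u * Real.exp (-(r + u) ^ 2 / (4 * t))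
      = Real.exp K * (u * Real.exp (-(u + c) ^ 2 / (4 * t))) := by
    intro u
    have e1 : Real.exp (b * u) * u * Real.exp (-(r + u) ^ 2 / (4 * t))
        = u * Real.exp (b * u + -(r + u) ^ 2 / (4 * t)) := by rw [Real.exp_add]; ring
    have e2 : Real.exp K * (u * Real.exp (-(u + c) ^ 2 / (4 * t)))
        = u * Real.exp (K + -(u + c) ^ 2 / (4 * t)) := by rw [Real.exp_add]; ring
    rw [e1, e2]
    congr 2
    rw [hcdef, hKdef]
    field_simp
    ring
  -- integrability facts
  have hform : ∀ u : ℝ, -(u + c) ^ 2 / (4 * t) = -(1/(4*t)) * (u + c) ^ 2 := fun u => by ring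
  have haux : (0:ℝ) < 1/(4*t) := by positivity
  have hInt1 : Integrable (fun u : ℝ => Real.exp (-(u + c) ^ 2 / (4 * t))) := by
    simp_rw [hform]
    exact (integrable_exp_neg_mul_sq haux).comp_add_right c
  have hInt2 : Integrable (fun u : ℝ => (u + c) * Real.exp (-(u + c) ^ 2 / (4 * t))) := by
    simp_rw [hform]
    exact (integrable_mul_exp_neg_mul_sq haux).comp_add_right c
  -- FTC part: ∫ (u+c) e^{-(u+c)²/(4t)} = 2t e^{-c²/(4t)}
  have hderiv : ∀ u : ℝ, HasDerivAt (fun u : ℝ => -(2 * t) * Real.exp (-(u + c) ^ 2 / (4 * t)))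
      ((u + c) * Real.exp (-(u + c) ^ 2 / (4 * t))) u := by
    intro u
    have h1 : HasDerivAt (fun u : ℝ => -(u + c) ^ 2 / (4 * t))
        (-(2 * (u + c)) / (4 * t)) u := by
      have := (((hasDerivAt_id u).add_const c).pow 2).neg.div_const (4 * t)
      simpa using this
    have h2 := h1.exp
    have h3 := h2.const_mul (-(2 * t))
    refine h3.congr_deriv ?_
    field_simp
    ring
  have htend : Tendsto (fun u : ℝ => -(2 * t) * Real.exp (-(u + c) ^ 2 / (4 * t))) atTop (nhds 0) := by
    have h1 : Tendsto (fun u : ℝ => (u + c) ^ 2) atTop atTop :=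
      (tendsto_pow_atTop two_ne_zero).comp (tendsto_atTop_add_const_right _ c tendsto_id)
    have h2 : Tendsto (fun u : ℝ => -(u + c) ^ 2 / (4 * t)) atTop atBot := by
      have h2' := tendsto_neg_atTop_atBot.comp (h1.atTop_div_const (by positivity : (0:ℝ) < 4 * t))
      exact h2'.congr fun u => (neg_div (4 * t) ((u + c) ^ 2)).symm
    have h3 : Tendsto (fun u : ℝ => Real.exp (-(u + c) ^ 2 / (4 * t))) atTop (nhds 0) :=
      Real.tendsto_exp_atBot.comp h2
    have h4 := h3.const_mul (-(2 * t))
    rw [mul_zero] at h4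
    exact h4
  have hFTC : ∫ u in Set.Ioi (0:ℝ), (u + c) * Real.exp (-(u + c) ^ 2 / (4 * t))
      = 2 * t * Real.exp (-c ^ 2 / (4 * t)) := by
    rw [integral_Ioi_of_hasDerivAt_of_tendsto' (fun u _ => hderiv u) hInt2.integrableOn htend]
    rw [zero_add]
    ring
  -- the moment integral
  have hmom : ∫ u in Set.Ioi (0:ℝ), u * Real.exp (-(u + c) ^ 2 / (4 * t))
      = 2 * t * Real.exp (-c ^ 2 / (4 * t))
        - c * (Real.sqrt (π * t) * erfc (c / (2 * Real.sqrt t))) := by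
    have hsplit : ∀ u : ℝ, u * Real.exp (-(u + c) ^ 2 / (4 * t))
        = (u + c) * Real.exp (-(u + c) ^ 2 / (4 * t)) - c * Real.exp (-(u + c) ^ 2 / (4 * t)) := by
      intro u; ring
    rw [setIntegral_congr_fun measurableSet_Ioi (fun u _ => hsplit u)]
    rw [integral_sub hInt2.integrableOn (hInt1.integrableOn.const_mul c), hFTC,
      integral_const_mul, gauss_tail t c ht]
  calc ∫ u in Set.Ioi (0 : ℝ), Real.exp (b * u) * u * Real.exp (-(r + u) ^ 2 / (4 * t))
      = ∫ u in Set.Ioi (0:ℝ), Real.exp K * (u * Real.exp (-(u + c) ^ 2 / (4 * t))) := by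
        exact setIntegral_congr_fun measurableSet_Ioi (fun u _ => hpt u)
    _ = Real.exp K * (2 * t * Real.exp (-c ^ 2 / (4 * t))
          - c * (Real.sqrt (π * t) * erfc (c / (2 * Real.sqrt t)))) := by
        rw [integral_const_mul, hmom]
    _ = Real.sqrt (π * t) * (8 * π * β * t - r)
            * Real.exp (-(b * r) + 16 * π ^ 2 * β ^ 2 * t)
            * erfc (r / (2 * Real.sqrt t) - b * Real.sqrt t)
        + 2 * t * Real.exp (-r ^ 2 / (4 * t)) := by
        have hst : 0 < Real.sqrt t := Real.sqrt_pos.mpr ht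
        have htt : Real.sqrt t * Real.sqrt t = t := Real.mul_self_sqrt ht.le
        have hc1 : c / (2 * Real.sqrt t) = r / (2 * Real.sqrt t) - b * Real.sqrt t := by
          rw [hcdef]
          field_simp
          linear_combination (2:ℝ) * b * htt
        have hc2 : Real.exp K * (2 * t * Real.exp (-c ^ 2 / (4 * t)))
            = 2 * t * Real.exp (-r ^ 2 / (4 * t)) := by
          rw [mul_comm (Real.exp K), mul_assoc, ← Real.exp_add]
          congr 2
          rw [hKdef, hcdef]
          field_simp
          ring
        have hKe : K = -(b * r) + 16 * π ^ 2 * β ^ 2 * t := by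
          rw [hKdef, hbdef]; ring
        rw [mul_sub, hc2, hc1, hKe, hcdef, hbdef]
        ring

end AuxLemmasForLaplaceGaussianMoment

theorem laplace_gaussian_moment (t β : ℝ) (ht : 0 < t) (hβ : 0 < β)
    (x : E3) (hx : x ≠ 0) :
    ∫ u in Set.Ioi (0 : ℝ),
        Real.exp (4 * π * β * u) * u * Real.exp (-(‖x‖ + u) ^ 2 / (4 * t))
      = Real.sqrt (π * t) * (8 * π * β * t - ‖x‖)
            * Real.exp (-(4 * π * β * ‖x‖) + 16 * π ^ 2 * β ^ 2 * t)
            * erfc (‖x‖ / (2 * Real.sqrt t) - 4 * π * β * Real.sqrt t)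
        + 2 * t * Real.exp (-‖x‖ ^ 2 / (4 * t)) := by
  exact laplace_gaussian_moment_aux t β ht hβ ‖x‖

end
end

section
/- Total mass of the attractive point interaction heat kernel: for all t, β > 0 and every x ∈ ℝ³ \ {0}, ∫_{ℝ³} P_t^β(x,y) dy = 1 + (1/(4πβ|x|)) · [ e^{−4πβ|x| + 16π²β²t} · erfc(|x|/(2√t) − 4πβ√t) − erfc(|x|/(2√t)) ]. -/
open MeasureTheory Real
open scoped Classical

noncomputable section

/-! ### Auxiliary lemmas -/

section Aux

open Set ENNReal

local notation "dim" => Module.finrank ℝ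

namespace PbetaAux

/-- Polar coordinates for the Lebesgue lower integral w.r.t. an additive Haar measure. -/
lemma lintegral_fun_norm_addHaar' {E : Type*} [NormedAddCommGroup E] [NormedSpace ℝ E]
    [MeasurableSpace E] [BorelSpace E] [Nontrivial E] [FiniteDimensional ℝ E]
    (μ : Measure E) [μ.IsAddHaarMeasure] (f : ℝ → ℝ≥0∞)
    (hf : Measurable f) :
    ∫⁻ x, f ‖x‖ ∂μ = dim E * μ (Metric.ball 0 1) *
      ∫⁻ y in Ioi (0 : ℝ), ENNReal.ofReal (y ^ (dim E - 1)) * f y := by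
  have hmeas : Measurable fun p : Metric.sphere (0 : E) 1 × Ioi (0 : ℝ) => f p.2 :=
    (hf.comp measurable_subtype_coe).comp measurable_snd
  calc
    ∫⁻ x, f ‖x‖ ∂μ = ∫⁻ x : ({(0)}ᶜ : Set E), f ‖x.1‖ ∂(μ.comap (↑)) := by
      rw [lintegral_subtype_comap (measurableSet_singleton _).compl fun x => f ‖x‖,
        restrict_compl_singleton]
    _ = ∫⁻ p : Metric.sphere (0 : E) 1 × Ioi (0 : ℝ), f p.2
          ∂(μ.toSphere.prod (.volumeIoiPow (dim E - 1))) := by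
      rw [← (μ.measurePreserving_homeomorphUnitSphereProd).lintegral_comp hmeas]
      apply lintegral_congr; intro x
      simp
    _ = μ.toSphere univ * ∫⁻ r : Ioi (0 : ℝ), f r ∂(Measure.volumeIoiPow (dim E - 1)) := by
      rw [lintegral_prod _ hmeas.aemeasurable]
      simp [lintegral_const, mul_comm]
    _ = dim E * μ (Metric.ball 0 1) *
          ∫⁻ y in Ioi (0 : ℝ), ENNReal.ofReal (y ^ (dim E - 1)) * f y := by
      rw [Measure.toSphere_apply_univ, Measure.volumeIoiPow,
        lintegral_withDensity_eq_lintegral_mul _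
          (by fun_prop) (show Measurable fun r : Ioi (0:ℝ) => f r.1
            from hf.comp measurable_subtype_coe)]
      rw [show ((fun r : Ioi (0:ℝ) => ENNReal.ofReal (r.1 ^ (dim E - 1))) *
          fun a : Ioi (0:ℝ) => f a.1) = fun a : Ioi (0:ℝ) =>
            (fun y : ℝ => ENNReal.ofReal (y ^ (dim E - 1)) * f y) a.1 from rfl,
        lintegral_subtype_comap measurableSet_Ioi]

lemma tshift (F : ℝ → ℝ≥0∞) (hF : Measurable F) (c : ℝ) :
    ∫⁻ v in Ioi (0 : ℝ), F (c + v) = ∫⁻ w in Ioi c, F w := by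
  have hmp : MeasurePreserving (fun v : ℝ => v + c) volume volume :=
    ⟨measurable_add_const c, map_add_right_eq_self volume c⟩
  have hpre : (fun v : ℝ => v + c) ⁻¹' (Ioi c) = Ioi 0 := by
    ext v; simp [lt_add_iff_pos_left]
  rw [show (∫⁻ w in Ioi c, F w) = ∫⁻ w in Ioi c, F w ∂(Measure.map (fun v : ℝ => v + c) volume)
      by rw [hmp.map_eq],
    setLIntegral_map measurableSet_Ioi hF (measurable_add_const c), hpre]
  apply lintegral_congr; intro v; rw [add_comm]

lemma tri (f h : ℝ → ℝ≥0∞) (hf : Measurable f) (hh : Measurable h) :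
    ∫⁻ u in Ioi (0 : ℝ), h u * ∫⁻ w in Ioi u, f w
      = ∫⁻ w in Ioi (0 : ℝ), f w * ∫⁻ u in Ioo 0 w, h u := by
  have hind : Measurable fun p : ℝ × ℝ => (Ioi p.1).indicator f p.2 := by
    have : (fun p : ℝ × ℝ => (Ioi p.1).indicator f p.2)
        = {q : ℝ × ℝ | q.1 < q.2}.indicator (fun q => f q.2) := by
      ext p
      by_cases hp : p.1 < p.2 <;>
        simp [Set.indicator, hp]
    rw [this]
    exact (hf.comp measurable_snd).indicator (measurableSet_lt measurable_fst measurable_snd)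
  calc
    ∫⁻ u in Ioi (0 : ℝ), h u * ∫⁻ w in Ioi u, f w
        = ∫⁻ u in Ioi (0 : ℝ), ∫⁻ w in Ioi (0 : ℝ), h u * (Ioi u).indicator f w := by
      apply setLIntegral_congr_fun measurableSet_Ioi
      intro u hu
      dsimp only
      rw [lintegral_const_mul _ (hf.indicator measurableSet_Ioi)]
      congr 1
      rw [lintegral_indicator measurableSet_Ioi _, Measure.restrict_restrict measurableSet_Ioi,
        inter_eq_left.2 (Ioi_subset_Ioi hu.le)]
    _ = ∫⁻ w in Ioi (0 : ℝ), ∫⁻ u in Ioi (0 : ℝ), h u * (Ioi u).indicator f w := by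
      apply lintegral_lintegral_swap
      exact ((hh.comp measurable_fst).mul hind).aemeasurable
    _ = ∫⁻ w in Ioi (0 : ℝ), f w * ∫⁻ u in Ioo 0 w, h u := by
      apply setLIntegral_congr_fun measurableSet_Ioi
      intro w hw
      dsimp only
      have : (fun u => h u * (Ioi u).indicator f w) = fun u => (Iio w).indicator h u * f w := by
        ext u
        by_cases hu : u < w <;> simp [Set.indicator, hu]
      rw [this, lintegral_mul_const _ (hh.indicator measurableSet_Iio),
        lintegral_indicator measurableSet_Iio _, Measure.restrict_restrict measurableSet_Iio,
        show Iio w ∩ Ioi 0 = Ioo 0 w by ext u; simp [mem_Ioo, and_comm], mul_comm]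

lemma key1 (H : ℝ → ℝ≥0∞) (hH : Measurable H) :
    ∫⁻ r in Ioi (0 : ℝ), ENNReal.ofReal r * H r
      = ∫⁻ p in Ioi (0 : ℝ), ∫⁻ v in Ioi (0 : ℝ), H (p + v) := by
  have h1 : ∀ p ∈ Ioi (0:ℝ), ∫⁻ v in Ioi (0 : ℝ), H (p + v) = (1:ℝ≥0∞) * ∫⁻ w in Ioi p, H w := by
    intro p _
    rw [one_mul, tshift H hH p]
  rw [setLIntegral_congr_fun measurableSet_Ioi h1,
    tri H (fun _ => 1) hH measurable_const]
  apply setLIntegral_congr_fun measurableSet_Ioi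
  intro w hw
  dsimp only
  rw [lintegral_one, Measure.restrict_apply_univ, Real.volume_Ioo, sub_zero, mul_comm]

variable {t b c : ℝ}

lemma gauss_integrable (ht : 0 < t) (c : ℝ) :
    Integrable (fun w : ℝ => Real.exp (-(c + w) ^ 2 / (4 * t))) := by
  have h : (fun w : ℝ => Real.exp (-(c + w) ^ 2 / (4 * t)))
      = fun w : ℝ => Real.exp (-(1 / (4 * t)) * (w + c) ^ 2) := by
    ext w; congr 1; field_simp; ring
  rw [h]
  exact (integrable_exp_neg_mul_sq (by positivity)).comp_add_right c

lemma linear_gauss_integrable (ht : 0 < t) (c : ℝ) :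
    Integrable (fun w : ℝ => w * Real.exp (-(c + w) ^ 2 / (4 * t))) := by
  have h : (fun w : ℝ => w * Real.exp (-(c + w) ^ 2 / (4 * t)))
      = fun w : ℝ => (fun z : ℝ => z * Real.exp (-(1 / (4 * t)) * z ^ 2)) (w + c)
          - c * Real.exp (-(c + w) ^ 2 / (4 * t)) := by
    ext w
    dsimp only
    have h' : -(1 / (4 * t)) * (w + c) ^ 2 = -(c + w) ^ 2 / (4 * t) := by field_simp; ring
    rw [h']; ring
  rw [h]
  exact ((integrable_mul_exp_neg_mul_sq (by positivity : (0:ℝ) < 1 / (4*t))).comp_add_right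
      c).sub ((gauss_integrable ht c).const_mul c)

lemma complete_sq (ht : 0 < t) (b c u : ℝ) :
    Real.exp (b * u) * Real.exp (-(c + u) ^ 2 / (4 * t))
      = Real.exp (b ^ 2 * t - b * c) * Real.exp (-((c - 2 * b * t) + u) ^ 2 / (4 * t)) := by
  rw [← Real.exp_add, ← Real.exp_add]
  congr 1
  field_simp
  ring

lemma exp_gauss_integrable (ht : 0 < t) (b c : ℝ) :
    Integrable (fun u : ℝ => Real.exp (b * u) * Real.exp (-(c + u) ^ 2 / (4 * t))) := by
  have h : (fun u : ℝ => Real.exp (b * u) * Real.exp (-(c + u) ^ 2 / (4 * t)))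
      = fun u => Real.exp (b ^ 2 * t - b * c)
          * Real.exp (-((c - 2 * b * t) + u) ^ 2 / (4 * t)) := by
    ext u; exact complete_sq ht b c u
  rw [h]
  exact (gauss_integrable ht (c - 2 * b * t)).const_mul _

/-- The basic Gaussian tail integral expressed through `erfc`. -/
lemma Phi_eq (ht : 0 < t) (c : ℝ) :
    ∫ w in Ioi (0 : ℝ), Real.exp (-(c + w) ^ 2 / (4 * t))
      = Real.sqrt (π * t) * erfc (c / (2 * Real.sqrt t)) := by
  have hs : 0 < Real.sqrt t := Real.sqrt_pos.2 ht
  have hmp : MeasurePreserving (fun v : ℝ => v + c) volume volume :=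
    ⟨measurable_add_const c, map_add_right_eq_self volume c⟩
  have hpre : (fun v : ℝ => v + c) ⁻¹' (Ioi c) = Ioi 0 := by
    ext v; simp [lt_add_iff_pos_left]
  have h1 : ∫ w in Ioi (0 : ℝ), Real.exp (-(c + w) ^ 2 / (4 * t))
      = ∫ s in Ioi c, Real.exp (-s ^ 2 / (4 * t)) := by
    rw [show (∫ s in Ioi c, Real.exp (-s ^ 2 / (4 * t)))
        = ∫ s in Ioi c, Real.exp (-s ^ 2 / (4 * t))
            ∂(Measure.map (fun v : ℝ => v + c) volume) by rw [hmp.map_eq],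
      setIntegral_map measurableSet_Ioi
        (by rw [hmp.map_eq]
            exact (Real.continuous_exp.comp
              ((continuous_pow 2).neg.div_const (4*t))).aestronglyMeasurable)
        (measurable_add_const c).aemeasurable,
      hpre]
    apply setIntegral_congr_fun measurableSet_Ioi
    intro w _
    simp only
    rw [add_comm]
  have h2 : ∀ x : ℝ, Real.exp (-(2 * Real.sqrt t * x) ^ 2 / (4 * t)) = Real.exp (-x ^ 2) := by
    intro x
    congr 1
    rw [mul_pow, mul_pow]
    rw [Real.sq_sqrt ht.le]
    field_simp
    ring
  have h3 := integral_comp_mul_left_Ioi (fun s => Real.exp (-s ^ 2 / (4 * t)))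
    (c / (2 * Real.sqrt t)) (by positivity : (0:ℝ) < 2 * Real.sqrt t)
  rw [mul_div_cancel₀ _ (by positivity : (2 * Real.sqrt t) ≠ 0)] at h3
  have h4 : ∫ x in Ioi (c / (2 * Real.sqrt t)),
      Real.exp (-(2 * Real.sqrt t * x) ^ 2 / (4 * t))
        = ∫ x in Ioi (c / (2 * Real.sqrt t)), Real.exp (-x ^ 2) := by
    apply setIntegral_congr_fun measurableSet_Ioi
    intro x _; exact h2 x
  have h3' : ∫ x in Ioi (c / (2 * Real.sqrt t)),
      Real.exp (-(2 * Real.sqrt t * x) ^ 2 / (4 * t))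
        = (2 * Real.sqrt t)⁻¹ • ∫ s in Ioi c, Real.exp (-s ^ 2 / (4 * t)) := h3
  rw [h4] at h3'
  have h5 : ∫ s in Ioi c, Real.exp (-s ^ 2 / (4 * t))
      = (2 * Real.sqrt t) * ∫ u in Ioi (c / (2 * Real.sqrt t)), Real.exp (-u ^ 2) := by
    rw [h3', smul_eq_mul]
    field_simp
  rw [h1, h5, erfc]
  have hπ : 0 < Real.sqrt π := Real.sqrt_pos.2 pi_pos
  have hsq : Real.sqrt (π * t) = Real.sqrt π * Real.sqrt t := Real.sqrt_mul pi_pos.le t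
  rw [hsq]
  field_simp

lemma exp_gauss_integral (ht : 0 < t) (b c : ℝ) :
    ∫ u in Ioi (0 : ℝ), Real.exp (b * u) * Real.exp (-(c + u) ^ 2 / (4 * t))
      = Real.exp (b ^ 2 * t - b * c)
          * (Real.sqrt (π * t) * erfc ((c - 2 * b * t) / (2 * Real.sqrt t))) := by
  rw [show (fun u : ℝ => Real.exp (b * u) * Real.exp (-(c + u) ^ 2 / (4 * t)))
      = fun u => Real.exp (b ^ 2 * t - b * c)
          * Real.exp (-((c - 2 * b * t) + u) ^ 2 / (4 * t)) from funext (complete_sq ht b c),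
    integral_const_mul, Phi_eq ht]

lemma expIoo {q : ℝ} (hb : 0 < b) (hq : 0 < q) :
    ∫ u in Ioo (0 : ℝ) q, Real.exp (b * u) = (Real.exp (b * q) - 1) / b := by
  have hder : ∀ u ∈ Set.uIcc (0:ℝ) q,
      HasDerivAt (fun z : ℝ => Real.exp (b * z) / b) (Real.exp (b * u)) u := by
    intro u _
    have h1 : HasDerivAt (fun z : ℝ => b * z) b u := by
      simpa using (hasDerivAt_id u).const_mul b
    have h2 := (Real.hasDerivAt_exp (b * u)).comp u h1
    have h3 := h2.div_const b
    rw [mul_div_cancel_right₀ _ hb.ne'] at h3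
    exact h3
  have hint : IntervalIntegrable (fun u : ℝ => Real.exp (b * u)) volume 0 q :=
    (Real.continuous_exp.comp (continuous_const.mul continuous_id)).intervalIntegrable 0 q
  have h := intervalIntegral.integral_eq_sub_of_hasDerivAt hder hint
  rw [intervalIntegral.integral_of_le hq.le] at h
  rw [← MeasureTheory.integral_Ioc_eq_integral_Ioo, h]
  rw [mul_zero, Real.exp_zero]
  ring

lemma master (ht : 0 < t) (hb : 0 < b) (a : ℝ) :
    (∫⁻ r in Ioi (0:ℝ), ENNReal.ofReal r * ENNReal.ofReal (Real.exp (-(a + r) ^ 2 / (4 * t))))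
      + ENNReal.ofReal b * ∫⁻ r in Ioi (0:ℝ), ENNReal.ofReal r *
          ∫⁻ u in Ioi (0:ℝ), ENNReal.ofReal (Real.exp (b * u))
            * ENNReal.ofReal (Real.exp (-(a + (u + r)) ^ 2 / (4 * t)))
      = ∫⁻ w in Ioi (0:ℝ), ENNReal.ofReal ((Real.exp (b * w) - 1) / b
          * Real.exp (-(a + w) ^ 2 / (4 * t))) := by
  have contg : Continuous fun w : ℝ => Real.exp (-(a + w) ^ 2 / (4 * t)) := by
    exact Real.continuous_exp.comp (((continuous_const.add continuous_id).pow 2).neg.div_const _)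
  set G : ℝ → ℝ≥0∞ := fun w => ENNReal.ofReal (Real.exp (-(a + w) ^ 2 / (4 * t))) with hGdef
  set Eb : ℝ → ℝ≥0∞ := fun u => ENNReal.ofReal (Real.exp (b * u)) with hEdef
  have hG : Measurable G := ENNReal.measurable_ofReal.comp contg.measurable
  have contE : Continuous fun u : ℝ => Real.exp (b * u) :=
    Real.continuous_exp.comp (continuous_const.mul continuous_id)
  have hE : Measurable Eb := ENNReal.measurable_ofReal.comp contE.measurable
  set Φ : ℝ → ℝ≥0∞ := fun s => ∫⁻ v in Ioi (0:ℝ), G (s + v) with hPhidef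
  have hΦ : Measurable Φ := by
    apply Measurable.lintegral_prod_right' (f := fun p : ℝ × ℝ => G (p.1 + p.2))
    exact hG.comp (measurable_fst.add measurable_snd)
  have hΦq : ∀ q : ℝ, Φ q = ∫⁻ w in Ioi q, G w := fun q => tshift G hG q
  have hM : ∀ q ∈ Ioi (0:ℝ), (∫⁻ u in Ioo (0:ℝ) q, Eb u)
      = ENNReal.ofReal ((Real.exp (b * q) - 1) / b) := by
    intro q hq
    have hint : IntegrableOn (fun u : ℝ => Real.exp (b * u)) (Ioo 0 q) :=
      (intervalIntegrable_iff_integrableOn_Ioo_of_le (le_of_lt hq)).1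
        (contE.intervalIntegrable 0 q)
    rw [← ofReal_integral_eq_lintegral_ofReal hint
      (Filter.Eventually.of_forall fun u => (Real.exp_pos _).le), expIoo hb hq]
  have hJ : (∫⁻ r in Ioi (0:ℝ), ENNReal.ofReal r * G r) = ∫⁻ p in Ioi (0:ℝ), Φ p :=
    key1 G hG
  have hD : (∫⁻ r in Ioi (0:ℝ), ENNReal.ofReal r * ∫⁻ u in Ioi (0:ℝ), Eb u * G (u + r))
      = ∫⁻ q in Ioi (0:ℝ), Φ q * ∫⁻ u in Ioo 0 q, Eb u := by
    calc
      (∫⁻ r in Ioi (0:ℝ), ENNReal.ofReal r * ∫⁻ u in Ioi (0:ℝ), Eb u * G (u + r))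
          = ∫⁻ r in Ioi (0:ℝ), ∫⁻ u in Ioi (0:ℝ), ENNReal.ofReal r * (Eb u * G (u + r)) := by
        apply lintegral_congr fun r => ?_
        rw [lintegral_const_mul' _ _ ENNReal.ofReal_ne_top]
      _ = ∫⁻ u in Ioi (0:ℝ), ∫⁻ r in Ioi (0:ℝ), ENNReal.ofReal r * (Eb u * G (u + r)) := by
        apply lintegral_lintegral_swap
        apply Measurable.aemeasurable
        exact (ENNReal.measurable_ofReal.comp measurable_fst).mul
          ((hE.comp measurable_snd).mul (hG.comp (measurable_snd.add measurable_fst)))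
      _ = ∫⁻ u in Ioi (0:ℝ), Eb u * ∫⁻ r in Ioi (0:ℝ), ENNReal.ofReal r * G (u + r) := by
        apply lintegral_congr fun u => ?_
        rw [← lintegral_const_mul' _ _ ENNReal.ofReal_ne_top]
        apply lintegral_congr fun r => ?_
        ring
      _ = ∫⁻ u in Ioi (0:ℝ), Eb u * ∫⁻ p in Ioi (0:ℝ), Φ (u + p) := by
        apply lintegral_congr fun u => ?_
        congr 1
        rw [key1 (fun r => G (u + r)) (hG.comp (measurable_const_add u))]
        apply lintegral_congr fun p => ?_
        apply lintegral_congr fun v => ?_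
        rw [add_assoc]
      _ = ∫⁻ u in Ioi (0:ℝ), Eb u * ∫⁻ q in Ioi u, Φ q := by
        apply lintegral_congr fun u => ?_
        rw [tshift Φ hΦ u]
      _ = ∫⁻ q in Ioi (0:ℝ), Φ q * ∫⁻ u in Ioo 0 q, Eb u := tri Φ Eb hΦ hE
  rw [hJ, hD, ← lintegral_const_mul' _ _ ENNReal.ofReal_ne_top,
    ← lintegral_add_left hΦ]
  have hcong : ∀ q ∈ Ioi (0:ℝ),
      Φ q + ENNReal.ofReal b * (Φ q * ∫⁻ u in Ioo 0 q, Eb u) = Eb q * Φ q := by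
    intro q hq
    have hq' : 0 < q := hq
    rw [hM q hq, ← mul_assoc, mul_comm (ENNReal.ofReal b) (Φ q), mul_assoc,
      ← ENNReal.ofReal_mul hb.le]
    rw [show b * ((Real.exp (b * q) - 1) / b) = Real.exp (b * q) - 1 by
      field_simp]
    have h1 : (1:ℝ≥0∞) + ENNReal.ofReal (Real.exp (b * q) - 1) = ENNReal.ofReal (Real.exp (b * q)) := by
      rw [← ENNReal.ofReal_one, ← ENNReal.ofReal_add zero_le_one
        (by
          have : (1:ℝ) ≤ Real.exp (b * q) := Real.one_le_exp (mul_pos hb hq').le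
          linarith)]
      congr 1
      ring
    calc Φ q + Φ q * ENNReal.ofReal (Real.exp (b * q) - 1)
        = Φ q * ((1:ℝ≥0∞) + ENNReal.ofReal (Real.exp (b * q) - 1)) := by
          rw [mul_add, mul_one]
      _ = Eb q * Φ q := by rw [h1, mul_comm]
  rw [setLIntegral_congr_fun measurableSet_Ioi hcong]
  have hstep : (∫⁻ q in Ioi (0:ℝ), Eb q * Φ q)
      = ∫⁻ w in Ioi (0:ℝ), G w * ∫⁻ u in Ioo 0 w, Eb u := by
    rw [show (fun q => Eb q * Φ q) = fun q => Eb q * ∫⁻ w in Ioi q, G w by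
      ext q; rw [hΦq q]]
    exact tri G Eb hG hE
  rw [hstep]
  apply setLIntegral_congr_fun measurableSet_Ioi
  intro w hw
  dsimp only
  have hw' : (0:ℝ) < w := hw
  have h1e : (1:ℝ) ≤ Real.exp (b * w) := Real.one_le_exp (mul_pos hb hw').le
  rw [hM w hw, ENNReal.ofReal_mul (div_nonneg (by linarith) hb.le), mul_comm]

set_option maxHeartbeats 1600000 in
lemma main_aux (t β : ℝ) (ht : 0 < t) (hβ : 0 < β)
    (x : E3) (hx : x ≠ 0) :
    ∫ y : E3, Pbeta β t x y
      = 1 + 1 / (4 * π * β * ‖x‖) *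
          (Real.exp (-(4 * π * β * ‖x‖) + 16 * π ^ 2 * β ^ 2 * t)
              * erfc (‖x‖ / (2 * Real.sqrt t) - 4 * π * β * Real.sqrt t)
            - erfc (‖x‖ / (2 * Real.sqrt t))) := by
  have hx0 : 0 < ‖x‖ := norm_pos_iff.2 hx
  -- canonical form of the integrand
  have hPb : (fun y : E3 => Pbeta β t x y) = fun y : E3 =>
      (4*π*t) ^ (-(3:ℝ)/2) * Real.exp (-‖y - x‖^2/(4*t))
      + 2*t/(‖x‖*‖y‖) * ((4*π*t) ^ (-(3:ℝ)/2) * Real.exp (-(‖x‖ + ‖y‖)^2/(4*t)))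
      + 2*(4*π*β)*t/(‖x‖*‖y‖) * ∫ u in Ioi (0:ℝ),
          Real.exp ((4*π*β)*u)
            * ((4*π*t) ^ (-(3:ℝ)/2) * Real.exp (-(‖x‖ + (u + ‖y‖))^2/(4*t))) := by
    funext y
    unfold Pbeta heatK heatR
    rw [norm_sub_rev]
    simp only [show ∀ u:ℝ, u + ‖x‖ + ‖y‖ = ‖x‖ + (u + ‖y‖) from fun u => by ring]
    ring_nf
  set a : ℝ := ‖x‖ with hadef
  set b : ℝ := 4*π*β with hbdef
  set K : ℝ := (4*π*t) ^ (-(3:ℝ)/2) with hKdef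
  have hb : 0 < b := by rw [hbdef]; positivity
  have hK : 0 < K := by rw [hKdef]; positivity
  -- the 1-dimensional real inner integral
  set S : ℝ → ℝ := fun r => ∫ u in Ioi (0:ℝ),
    Real.exp (b*u) * Real.exp (-((a+r) + u)^2/(4*t)) with hSdef
  have hSnn : ∀ r : ℝ, 0 ≤ S r := fun r =>
    setIntegral_nonneg measurableSet_Ioi fun u _ => by positivity
  have hSintble : ∀ r : ℝ, IntegrableOn
      (fun u : ℝ => Real.exp (b*u) * Real.exp (-((a+r) + u)^2/(4*t))) (Ioi 0) :=
    fun r => (exp_gauss_integrable ht b (a+r)).integrableOn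
  have hSint : ∀ r : ℝ, (∫ u in Ioi (0:ℝ),
      Real.exp (b*u) * (K * Real.exp (-(a+(u+r))^2/(4*t)))) = K * S r := by
    intro r
    rw [show (fun u:ℝ => Real.exp (b*u) * (K * Real.exp (-(a+(u+r))^2/(4*t))))
        = fun u => K * (Real.exp (b*u) * Real.exp (-((a+r)+u)^2/(4*t))) from
      funext fun u => by rw [show a+(u+r) = (a+r)+u by ring]; ring, integral_const_mul]
  -- `S` at the `ℝ≥0∞` level
  set SL : ℝ → ℝ≥0∞ := fun r => ∫⁻ u in Ioi (0:ℝ),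
    ENNReal.ofReal (Real.exp (b*u) * Real.exp (-((a+r) + u)^2/(4*t))) with hSLdef
  have hSL : ∀ r : ℝ, ENNReal.ofReal (S r) = SL r := fun r =>
    ofReal_integral_eq_lintegral_ofReal (hSintble r)
      (Filter.Eventually.of_forall fun u => by positivity)
  have hSLmeas : Measurable SL := by
    apply Measurable.lintegral_prod_right'
      (f := fun p : ℝ × ℝ => ENNReal.ofReal (Real.exp (b*p.2)
        * Real.exp (-((a+p.1) + p.2)^2/(4*t))))
    apply ENNReal.measurable_ofReal.comp
    apply Continuous.measurable
    apply Continuous.mul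
    · exact Real.continuous_exp.comp (continuous_const.mul continuous_snd)
    · exact Real.continuous_exp.comp
        ((((continuous_const.add continuous_fst).add continuous_snd).pow 2).neg.div_const _)
  have hSmeas : Measurable S := by
    have : S = fun r => (SL r).toReal := by
      funext r
      rw [← hSL r, ENNReal.toReal_ofReal (hSnn r)]
    rw [this]
    exact ENNReal.measurable_toReal.comp hSLmeas
  -- rewrite the integrand once more, using S
  have hPb2 : (fun y : E3 => Pbeta β t x y) = fun y : E3 =>
      K * Real.exp (-‖y - x‖^2/(4*t))
      + 2*t/(a*‖y‖) * (K * Real.exp (-(a + ‖y‖)^2/(4*t)))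
      + 2*b*t/(a*‖y‖) * (K * S ‖y‖) := by
    rw [hPb]
    funext y
    rw [hSint ‖y‖]
  clear hPb
  -- nonnegativity and measurability of the new integrand
  have hcont1 : Continuous fun y : E3 => K * Real.exp (-‖y - x‖^2/(4*t)) := by
    apply continuous_const.mul
    apply Real.continuous_exp.comp
    exact (((continuous_id.sub continuous_const).norm.pow 2).neg.div_const _)
  have hmeas2 : Measurable fun y : E3 => 2*t/(a*‖y‖) * (K * Real.exp (-(a + ‖y‖)^2/(4*t))) := by
    apply Measurable.mul
    · exact (measurable_const.div ((measurable_const.mul measurable_norm)))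
    · apply Measurable.const_mul
      apply Continuous.measurable
      exact Real.continuous_exp.comp
        (((continuous_const.add continuous_norm).pow 2).neg.div_const _)
  have hmeas3 : Measurable fun y : E3 => 2*b*t/(a*‖y‖) * (K * S ‖y‖) := by
    apply Measurable.mul
    · exact (measurable_const.div ((measurable_const.mul measurable_norm)))
    · exact ((hSmeas.comp measurable_norm).const_mul K)
  have hnn1 : ∀ y : E3, 0 ≤ K * Real.exp (-‖y - x‖^2/(4*t)) := fun y => by positivity
  have hnn2 : ∀ y : E3, 0 ≤ 2*t/(a*‖y‖) * (K * Real.exp (-(a + ‖y‖)^2/(4*t))) := fun y => by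
    have : 0 ≤ a * ‖y‖ := by positivity
    positivity
  have hnn3 : ∀ y : E3, 0 ≤ 2*b*t/(a*‖y‖) * (K * S ‖y‖) := fun y => by
    apply mul_nonneg
    · apply div_nonneg (by positivity)
      positivity
    · exact mul_nonneg hK.le (hSnn _)
  -- pass to the lower Lebesgue integral
  rw [hPb2, integral_eq_lintegral_of_nonneg_ae (f := fun y : E3 =>
      K * Real.exp (-‖y - x‖^2/(4*t))
      + 2*t/(a*‖y‖) * (K * Real.exp (-(a + ‖y‖)^2/(4*t)))
      + 2*b*t/(a*‖y‖) * (K * S ‖y‖))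
    (Filter.Eventually.of_forall fun y => by
      have := hnn1 y; have := hnn2 y; have := hnn3 y; positivity)
    ((hcont1.measurable.add hmeas2).add hmeas3).aestronglyMeasurable]
  -- split the lower integral in three
  have hofReal : ∀ y : E3, ENNReal.ofReal
        (K * Real.exp (-‖y - x‖^2/(4*t))
          + 2*t/(a*‖y‖) * (K * Real.exp (-(a + ‖y‖)^2/(4*t)))
          + 2*b*t/(a*‖y‖) * (K * S ‖y‖))
      = ENNReal.ofReal (K * Real.exp (-‖y - x‖^2/(4*t)))
        + ENNReal.ofReal (2*t/(a*‖y‖) * (K * Real.exp (-(a + ‖y‖)^2/(4*t))))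
        + ENNReal.ofReal (2*b*t/(a*‖y‖) * (K * S ‖y‖)) := by
    intro y
    rw [ENNReal.ofReal_add (by have := hnn1 y; have := hnn2 y; positivity) (hnn3 y),
      ENNReal.ofReal_add (hnn1 y) (hnn2 y)]
  rw [lintegral_congr hofReal,
    lintegral_add_left (f := fun y : E3 => ENNReal.ofReal (K * Real.exp (-‖y - x‖^2/(4*t)))
      + ENNReal.ofReal (2*t/(a*‖y‖) * (K * Real.exp (-(a + ‖y‖)^2/(4*t)))))
      ((ENNReal.measurable_ofReal.comp hcont1.measurable).add
        (ENNReal.measurable_ofReal.comp hmeas2)) _,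
    lintegral_add_left (f := fun y : E3 => ENNReal.ofReal (K * Real.exp (-‖y - x‖^2/(4*t))))
      (ENNReal.measurable_ofReal.comp hcont1.measurable) _]
  -- first piece: total mass one
  have hexparg : ∀ y : E3, -‖y - x‖^2/(4*t) = -(1/(4*t)) * ‖y - x‖^2 := fun y => by
    field_simp
  have hint0 : Integrable (fun v : E3 => Real.exp (-(1/(4*t)) * ‖v‖^2)) := by
    have hc : (0:ℝ) < ((1/(4*t):ℝ):ℂ).re := by simp; positivity
    have h := (GaussianFourier.integrable_cexp_neg_mul_sq_norm_add (V := E3) hc 0 0).norm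
    apply h.congr
    filter_upwards with v
    rw [show (-((1/(4*t):ℝ):ℂ) * (‖v‖:ℂ)^2 + 0 * ((inner ℝ (0:E3) v : ℝ):ℂ))
        = ((-(1/(4*t)) * ‖v‖^2 : ℝ):ℂ) by push_cast; ring]
    rw [Complex.norm_exp, Complex.ofReal_re]
  have hint1 : Integrable (fun y : E3 => K * Real.exp (-‖y - x‖^2/(4*t))) := by
    apply ((hint0.comp_sub_right x).const_mul K).congr
    filter_upwards with y
    rw [hexparg y]
  have hmass : ∫ y : E3, K * Real.exp (-‖y - x‖^2/(4*t)) = 1 := by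
    rw [show (fun y : E3 => K * Real.exp (-‖y - x‖^2/(4*t)))
        = fun y => K * Real.exp (-(1/(4*t)) * ‖y - x‖^2) from funext fun y => by
          rw [hexparg y],
      integral_const_mul,
      integral_sub_right_eq_self (fun v : E3 => Real.exp (-(1/(4*t)) * ‖v‖^2)) x,
      GaussianFourier.integral_rexp_neg_mul_sq_norm (by positivity : (0:ℝ) < 1/(4*t))]
    have hfr : ((Module.finrank ℝ E3 : ℝ)) = 3 := by
      rw [finrank_euclideanSpace_fin]; norm_num
    rw [hfr, show π / (1/(4*t)) = 4*π*t by field_simp, hKdef,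
      ← Real.rpow_add (by positivity : (0:ℝ) < 4*π*t)]
    norm_num
  have hL1 : (∫⁻ y : E3, ENNReal.ofReal (K * Real.exp (-‖y - x‖^2/(4*t)))) = 1 := by
    rw [← ofReal_integral_eq_lintegral_ofReal hint1
      (Filter.Eventually.of_forall fun y => hnn1 y), hmass, ENNReal.ofReal_one]
  -- polar coordinate constants
  have hdim : Module.finrank ℝ E3 = 3 := finrank_euclideanSpace_fin
  have hball : ((Module.finrank ℝ E3 : ℝ≥0∞)) * volume (Metric.ball (0:E3) 1)
      = ENNReal.ofReal (4*π) := by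
    rw [hdim, EuclideanSpace.volume_ball]
    simp only [Fintype.card_fin]
    have hΓ : Real.Gamma ((3:ℕ) / 2 + 1 : ℝ) = 3/4 * Real.sqrt π := by
      rw [show ((3:ℕ) / 2 + 1 : ℝ) = (3:ℝ)/2 + 1 by norm_num,
        Real.Gamma_add_one (by norm_num : (3:ℝ)/2 ≠ 0),
        show (3:ℝ)/2 = 1/2 + 1 by norm_num,
        Real.Gamma_add_one (by norm_num : (1:ℝ)/2 ≠ 0), Real.Gamma_one_half_eq]
      ring
    rw [hΓ]
    have hπ : 0 < Real.sqrt π := Real.sqrt_pos.2 pi_pos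
    have h2 : Real.sqrt π * Real.sqrt π = π := Real.mul_self_sqrt pi_pos.le
    rw [show Real.sqrt π ^ 3 / (3/4*Real.sqrt π) = 4*π/3 by
      rw [pow_succ, pow_two, h2]
      field_simp]
    rw [ENNReal.ofReal_one, one_pow, one_mul,
      show ((3:ℕ):ℝ≥0∞) = ENNReal.ofReal (3:ℝ) by simp,
      ← ENNReal.ofReal_mul (by norm_num)]
    congr 1
    ring
  -- second piece via polar coordinates
  have hL2 : (∫⁻ y : E3, ENNReal.ofReal (2*t/(a*‖y‖) * (K * Real.exp (-(a + ‖y‖)^2/(4*t)))))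
      = ENNReal.ofReal (8*π*t*K/a) *
          ∫⁻ r in Ioi (0:ℝ), ENNReal.ofReal r
            * ENNReal.ofReal (Real.exp (-(a+r)^2/(4*t))) := by
    have hF2 : Measurable fun r : ℝ =>
        ENNReal.ofReal (2*t/(a*r) * (K * Real.exp (-(a + r)^2/(4*t)))) := by
      apply ENNReal.measurable_ofReal.comp
      apply Measurable.mul
      · exact measurable_const.div (measurable_const.mul measurable_id)
      · apply Measurable.const_mul
        exact (Real.continuous_exp.comp
          (((continuous_const.add continuous_id).pow 2).neg.div_const _)).measurable
    rw [lintegral_fun_norm_addHaar' (volume : Measure E3)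
      (fun r : ℝ => ENNReal.ofReal (2*t/(a*r) * (K * Real.exp (-(a + r)^2/(4*t))))) hF2,
      hball, hdim]
    have hcong2 : ∀ r ∈ Ioi (0:ℝ), ENNReal.ofReal (r^(3-1))
        * ENNReal.ofReal (2*t/(a*r) * (K * Real.exp (-(a+r)^2/(4*t))))
        = ENNReal.ofReal (2*t*K/a)
            * (ENNReal.ofReal r * ENNReal.ofReal (Real.exp (-(a+r)^2/(4*t)))) := by
      intro r hr
      have hr' : (0:ℝ) < r := hr
      rw [← ENNReal.ofReal_mul (by positivity), ← ENNReal.ofReal_mul (by positivity),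
        ← ENNReal.ofReal_mul (by positivity)]
      congr 1
      field_simp
    rw [setLIntegral_congr_fun measurableSet_Ioi hcong2,
      lintegral_const_mul' _ _ ENNReal.ofReal_ne_top, ← mul_assoc,
      ← ENNReal.ofReal_mul (by positivity)]
    congr 2
    field_simp
    ring
  -- third piece via polar coordinates
  have hL3 : (∫⁻ y : E3, ENNReal.ofReal (2*b*t/(a*‖y‖) * (K * S ‖y‖)))
      = ENNReal.ofReal (8*π*t*K/a) * (ENNReal.ofReal b *
          ∫⁻ r in Ioi (0:ℝ), ENNReal.ofReal r *
            ∫⁻ u in Ioi (0:ℝ), ENNReal.ofReal (Real.exp (b*u))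
              * ENNReal.ofReal (Real.exp (-(a+(u+r))^2/(4*t)))) := by
    have hF3 : Measurable fun r : ℝ => ENNReal.ofReal (2*b*t/(a*r) * (K * S r)) := by
      apply ENNReal.measurable_ofReal.comp
      apply Measurable.mul
      · exact measurable_const.div (measurable_const.mul measurable_id)
      · exact hSmeas.const_mul K
    rw [lintegral_fun_norm_addHaar' (volume : Measure E3)
      (fun r : ℝ => ENNReal.ofReal (2*b*t/(a*r) * (K * S r))) hF3, hball, hdim]
    have hSLalt : ∀ r : ℝ, ENNReal.ofReal (S r)
        = ∫⁻ u in Ioi (0:ℝ), ENNReal.ofReal (Real.exp (b*u))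
            * ENNReal.ofReal (Real.exp (-(a+(u+r))^2/(4*t))) := by
      intro r
      rw [hSL r, hSLdef]
      apply lintegral_congr fun u => ?_
      rw [← ENNReal.ofReal_mul (by positivity)]
      congr 2
      ring_nf
    have hcong3 : ∀ r ∈ Ioi (0:ℝ), ENNReal.ofReal (r^(3-1))
        * ENNReal.ofReal (2*b*t/(a*r) * (K * S r))
        = (ENNReal.ofReal (2*t*K/a) * ENNReal.ofReal b)
            * (ENNReal.ofReal r *
              ∫⁻ u in Ioi (0:ℝ), ENNReal.ofReal (Real.exp (b*u))
                * ENNReal.ofReal (Real.exp (-(a+(u+r))^2/(4*t)))) := by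
      intro r hr
      have hr' : (0:ℝ) < r := hr
      have h1 : 0 ≤ S r := hSnn r
      have e1 : ENNReal.ofReal (r^(3-1)) * ENNReal.ofReal (2*b*t/(a*r) * (K * S r))
          = ENNReal.ofReal ((2*t*K/a) * b * (r * S r)) := by
        rw [← ENNReal.ofReal_mul (by positivity)]
        congr 1
        field_simp
      rw [e1, ENNReal.ofReal_mul (show (0:ℝ) ≤ 2*t*K/a*b by positivity),
        ENNReal.ofReal_mul (show (0:ℝ) ≤ 2*t*K/a by positivity),
        ENNReal.ofReal_mul hr'.le, hSLalt r]
    rw [setLIntegral_congr_fun measurableSet_Ioi hcong3,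
      lintegral_const_mul' _ _ (by
        exact ENNReal.mul_ne_top ENNReal.ofReal_ne_top ENNReal.ofReal_ne_top),
      ← mul_assoc, ← mul_assoc,
      ← ENNReal.ofReal_mul (by positivity), mul_assoc]
    congr 2
    field_simp
    ring
  rw [hL1, hL2, hL3]
  -- apply the master identity
  rw [add_assoc, ← mul_add (ENNReal.ofReal (8*π*t*K/a))]
  rw [master ht hb a]
  -- identify the remaining lower integral with a real integral
  have hRsplit : (fun w : ℝ => (Real.exp (b*w) - 1)/b * Real.exp (-(a+w)^2/(4*t)))
      = fun w => (1/b) * (Real.exp (b*w) * Real.exp (-(a+w)^2/(4*t)))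
          - (1/b) * Real.exp (-(a+w)^2/(4*t)) := by
    funext w
    field_simp
  have hRint : IntegrableOn
      (fun w : ℝ => (Real.exp (b*w) - 1)/b * Real.exp (-(a+w)^2/(4*t))) (Ioi 0) := by
    rw [hRsplit]
    exact (((exp_gauss_integrable ht b a).const_mul (1/b)).sub
      ((gauss_integrable ht a).const_mul (1/b))).integrableOn
  have hRnn : 0 ≤ᵐ[volume.restrict (Ioi (0:ℝ))]
      fun w => (Real.exp (b*w) - 1)/b * Real.exp (-(a+w)^2/(4*t)) := by
    filter_upwards [ae_restrict_mem measurableSet_Ioi] with w hw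
    have hw' : (0:ℝ) < w := hw
    have h1 : (1:ℝ) ≤ Real.exp (b*w) := Real.one_le_exp (mul_pos hb hw').le
    exact mul_nonneg (div_nonneg (by linarith) hb.le) (Real.exp_pos _).le
  have hRnn0 : 0 ≤ ∫ w in Ioi (0:ℝ), (Real.exp (b*w) - 1)/b * Real.exp (-(a+w)^2/(4*t)) :=
    setIntegral_nonneg measurableSet_Ioi fun w hw => by
      have hw' : (0:ℝ) < w := hw
      have h1 : (1:ℝ) ≤ Real.exp (b*w) := Real.one_le_exp (mul_pos hb hw').le
      exact mul_nonneg (div_nonneg (by linarith) hb.le) (Real.exp_pos _).le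
  rw [← ofReal_integral_eq_lintegral_ofReal hRint hRnn]
  -- evaluate the real integral
  have hRval : (∫ w in Ioi (0:ℝ), (Real.exp (b*w) - 1)/b * Real.exp (-(a+w)^2/(4*t)))
      = (1/b) * (Real.exp (b^2*t - b*a)
            * (Real.sqrt (π*t) * erfc ((a - 2*b*t)/(2*Real.sqrt t))))
        - (1/b) * (Real.sqrt (π*t) * erfc (a/(2*Real.sqrt t))) := by
    rw [hRsplit, integral_sub (((exp_gauss_integrable ht b a).const_mul (1/b)).integrableOn)
      (((gauss_integrable ht a).const_mul (1/b)).integrableOn),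
      integral_const_mul, integral_const_mul, exp_gauss_integral ht b a, Phi_eq ht a]
  have hZnn0 : 0 ≤ (1/b) * (Real.exp (b^2*t - b*a)
            * (Real.sqrt (π*t) * erfc ((a - 2*b*t)/(2*Real.sqrt t))))
        - (1/b) * (Real.sqrt (π*t) * erfc (a/(2*Real.sqrt t))) := hRval ▸ hRnn0
  rw [hRval, ← ENNReal.ofReal_mul (by positivity : (0:ℝ) ≤ 8*π*t*K/a),
    show (1:ℝ≥0∞) = ENNReal.ofReal 1 from ENNReal.ofReal_one.symm,
    ← ENNReal.ofReal_add (by norm_num) (by positivity), ENNReal.toReal_ofReal (by positivity)]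
  -- final real computation
  have hsqpos : (0:ℝ) < Real.sqrt (π*t) := Real.sqrt_pos.2 (by positivity)
  have hts : Real.sqrt t * Real.sqrt t = t := Real.mul_self_sqrt ht.le
  have hs0 : Real.sqrt t ≠ 0 := by positivity
  have hZarg : (a - 2*b*t)/(2*Real.sqrt t) = a/(2*Real.sqrt t) - b*Real.sqrt t := by
    field_simp
    linear_combination (2*b) * hts
  have hexp2 : b^2*t - b*a = -(b*a) + 16*π^2*β^2*t := by rw [hbdef]; ring
  rw [hZarg, hexp2]
  have h32 : (4*π*t) ^ ((3:ℝ)/2) = 8*π*t*Real.sqrt (π*t) := by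
    rw [show (3:ℝ)/2 = 1 + 1/2 by norm_num, Real.rpow_add (by positivity : (0:ℝ) < 4*π*t),
      Real.rpow_one, ← Real.sqrt_eq_rpow, show (4:ℝ)*π*t = 4*(π*t) by ring,
      Real.sqrt_mul (by norm_num : (0:ℝ) ≤ 4),
      show Real.sqrt 4 = 2 by
        rw [show (4:ℝ) = 2^2 by norm_num, Real.sqrt_sq (by norm_num : (0:ℝ) ≤ 2)]]
    ring
  have hKc : 8*π*t*K*Real.sqrt (π*t) = 1 := by
    rw [hKdef, show -(3:ℝ)/2 = -((3:ℝ)/2) by ring,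
      Real.rpow_neg (by positivity : (0:ℝ) ≤ 4*π*t), h32]
    field_simp
  have hKval : K = 1/(8*π*t*Real.sqrt (π*t)) := by
    rw [eq_div_iff (by positivity : 8*π*t*Real.sqrt (π*t) ≠ 0)]
    linear_combination hKc
  rw [hKval]
  field_simp


end PbetaAux

end Aux

theorem pbeta_total_mass (t β : ℝ) (ht : 0 < t) (hβ : 0 < β)
    (x : E3) (hx : x ≠ 0) :
    ∫ y : E3, Pbeta β t x y
      = 1 + 1 / (4 * π * β * ‖x‖) *
          (Real.exp (-(4 * π * β * ‖x‖) + 16 * π ^ 2 * β ^ 2 * t)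
              * erfc (‖x‖ / (2 * Real.sqrt t) - 4 * π * β * Real.sqrt t)
            - erfc (‖x‖ / (2 * Real.sqrt t))) :=
  PbetaAux.main_aux t β ht hβ x hx

end
end

section
/- Lower bound for the total mass: for all T, β > 0 and every x ∈ ℝ³ \ {0}, 1 + Q_T^β(x) ≥ (√T/(|x|√π)) · e^{−|x|²/(4T)}. -/
open MeasureTheory Real
open scoped Classical

noncomputable section

lemma integrable_exp_quad {b : ℝ} (hb : 0 < b) (d : ℝ) :
    Integrable fun x : ℝ => Real.exp (-b * x ^ 2 + d * x) := by
  have h1 : Integrable fun x : ℝ => Real.exp (-b * (x - d / (2 * b)) ^ 2) :=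
    (integrable_exp_neg_mul_sq hb).comp_sub_right (d / (2 * b))
  have h2 := h1.const_mul (Real.exp (d ^ 2 / (4 * b)))
  refine h2.congr (Filter.Eventually.of_forall fun x => ?_)
  show Real.exp (d ^ 2 / (4 * b)) * Real.exp (-b * (x - d / (2 * b)) ^ 2)
      = Real.exp (-b * x ^ 2 + d * x)
  rw [← Real.exp_add]
  congr 1
  field_simp
  ring

theorem total_mass_lower_bound (T β : ℝ) (hT : 0 < T) (hβ : 0 < β)
    (x : E3) (hx : x ≠ 0) :
    Real.sqrt T / (‖x‖ * Real.sqrt π) * Real.exp (-‖x‖ ^ 2 / (4 * T))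
      ≤ 1 + Qbeta β T x := by
  rw [Qbeta, if_neg hT.ne']
  have hπ : (0 : ℝ) < π := Real.pi_pos
  set r : ℝ := ‖x‖ with hrdef
  have hr : 0 < r := norm_pos_iff.mpr hx
  set c : ℝ := 4 * π * β with hcdef
  have hc : 0 < c := by positivity
  set b : ℝ := (4 * T)⁻¹ with hbdef
  have hb : 0 < b := by positivity
  have hform : ∀ s : ℝ, -(r + s) ^ 2 / (4 * T) = -b * s ^ 2 + (-(2 * b * r)) * s + -(b * r ^ 2) := by
    intro s
    rw [hbdef]
    field_simp
    ring
  set E : ℝ → ℝ := fun w => Real.exp (-(r + w) ^ 2 / (4 * T)) with hEdef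
  have hEpos : ∀ w, 0 < E w := fun w => Real.exp_pos _
  -- integrability of exp(d w) * E w on ℝ
  have key : ∀ d : ℝ, Integrable fun w : ℝ => Real.exp (d * w) * E w := by
    intro d
    have h := (integrable_exp_quad hb (d - 2 * b * r)).const_mul (Real.exp (-(b * r ^ 2)))
    refine h.congr (Filter.Eventually.of_forall fun w => ?_)
    rw [hEdef]
    simp only
    rw [hform w, ← Real.exp_add, ← Real.exp_add]
    congr 1
    ring
  have hexp1 : Integrable E := by
    have := key 0
    refine this.congr (Filter.Eventually.of_forall fun w => ?_)
    simp
  have hexp2 : Integrable fun w : ℝ => Real.exp (c * w) * E w := key c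
  -- the antiderivative for (w + r) * E w
  have hderiv : ∀ w : ℝ, HasDerivAt (fun w => -(2 * T) * E w) ((w + r) * E w) w := by
    intro w
    have h1 : HasDerivAt (fun w : ℝ => -(r + w) ^ 2 / (4 * T))
        (-(2 * (r + w)) / (4 * T)) w := by
      have := (((hasDerivAt_id w).const_add r).pow 2).neg.div_const (4 * T)
      simpa using this
    have h2 := (h1.exp).const_mul (-(2 * T))
    refine h2.congr_deriv ?_
    rw [hEdef]
    field_simp
    ring
  have htend : Filter.Tendsto (fun w => -(2 * T) * E w) Filter.atTop (nhds 0) := by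
    have h1 : Filter.Tendsto (fun w : ℝ => r + w) Filter.atTop Filter.atTop :=
      Filter.tendsto_atTop_add_const_left _ r Filter.tendsto_id
    have h2 : Filter.Tendsto (fun w : ℝ => (r + w) ^ 2) Filter.atTop Filter.atTop := by
      have := h1.atTop_mul_atTop₀ h1
      refine this.congr fun w => ?_
      ring
    have h3 : Filter.Tendsto (fun w : ℝ => -(r + w) ^ 2 / (4 * T)) Filter.atTop Filter.atBot := by
      have h4 := h2.atTop_div_const (by positivity : (0:ℝ) < 4 * T)
      have h5 := Filter.tendsto_neg_atTop_atBot.comp h4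
      refine h5.congr fun w => ?_
      simp [neg_div]
    have h6 : Filter.Tendsto E Filter.atTop (nhds 0) := Real.tendsto_exp_atBot.comp h3
    have := h6.const_mul (-(2 * T))
    simpa using this
  have hcont : ContinuousWithinAt (fun w => -(2 * T) * E w) (Set.Ici 0) 0 :=
    (hderiv 0).continuousAt.continuousWithinAt
  have hnonneg : ∀ w ∈ Set.Ioi (0 : ℝ), 0 ≤ (w + r) * E w := by
    intro w hw
    have : (0:ℝ) < w := hw
    have := hEpos w
    positivity
  have hA : ∫ w in Set.Ioi (0 : ℝ), (w + r) * E w = 0 - -(2 * T) * E 0 :=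
    integral_Ioi_of_hasDerivAt_of_nonneg hcont (fun w _ => hderiv w) hnonneg htend
  have hAint : IntegrableOn (fun w => (w + r) * E w) (Set.Ioi (0 : ℝ)) :=
    integrableOn_Ioi_deriv_of_nonneg hcont (fun w _ => hderiv w) hnonneg htend
  have hE0 : E 0 = Real.exp (-r ^ 2 / (4 * T)) := by rw [hEdef]; norm_num
  have hAval : ∫ w in Set.Ioi (0 : ℝ), (w + r) * E w = 2 * T * Real.exp (-r ^ 2 / (4 * T)) := by
    rw [hA, hE0]; ring
  -- bound on B
  set B : ℝ := ∫ w in Set.Ioi (0 : ℝ), E w with hBdef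
  set S : ℝ := Real.sqrt (π * T) with hSdef
  have hS : 0 < S := Real.sqrt_pos.mpr (by positivity)
  have hB_le : B ≤ S := by
    have h1 : B ≤ ∫ w in Set.Ioi (0 : ℝ), Real.exp (-b * w ^ 2) := by
      refine setIntegral_mono_on hexp1.integrableOn
        (integrable_exp_neg_mul_sq hb).integrableOn measurableSet_Ioi fun w hw => ?_
      have hw' : (0:ℝ) < w := hw
      rw [hEdef]
      apply Real.exp_le_exp.mpr
      rw [hbdef]
      rw [show -(4 * T)⁻¹ * w ^ 2 = -w ^ 2 / (4 * T) by field_simp]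
      rw [div_le_div_iff_of_pos_right (by positivity : (0:ℝ) < 4 * T)]
      nlinarith
    have h2 : ∫ w in Set.Ioi (0 : ℝ), Real.exp (-b * w ^ 2) = Real.sqrt (π / b) / 2 :=
      integral_gaussian_Ioi b
    have h3 : Real.sqrt (π / b) / 2 = S := by
      rw [hSdef, hbdef]
      rw [show π / (4 * T)⁻¹ = 4 * (π * T) by field_simp]
      rw [show (4 : ℝ) * (π * T) = 2 ^ 2 * (π * T) by norm_num]
      rw [Real.sqrt_mul (by positivity), Real.sqrt_sq (by norm_num : (0:ℝ) ≤ 2)]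
      ring
    calc B ≤ _ := h1
      _ = S := by rw [h2, h3]
  -- monotone comparison
  set I : ℝ := ∫ w in Set.Ioi (0 : ℝ),
      (Real.exp (c * w) - 1) * E w with hIdef
  have hIint : IntegrableOn (fun w => (Real.exp (c * w) - 1) * E w) (Set.Ioi (0 : ℝ)) := by
    refine ((hexp2.sub hexp1).congr (Filter.Eventually.of_forall fun w => ?_)).integrableOn
    simp only [Pi.sub_apply]
    ring
  have hgint : IntegrableOn (fun w => c * w * E w) (Set.Ioi (0 : ℝ)) := by
    have h := (hAint.const_mul c).sub ((hexp1.integrableOn).const_mul (c * r))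
    refine h.congr (Filter.Eventually.of_forall fun w => ?_)
    simp only [Pi.sub_apply]
    ring
  have hmono : ∫ w in Set.Ioi (0 : ℝ), c * w * E w ≤ I := by
    refine setIntegral_mono_on hgint hIint measurableSet_Ioi fun w hw => ?_
    have hw' : (0:ℝ) < w := hw
    have h1 : c * w + 1 ≤ Real.exp (c * w) := Real.add_one_le_exp _
    have := (hEpos w).le
    nlinarith
  have hsplit : ∫ w in Set.Ioi (0 : ℝ), c * w * E w
      = c * (2 * T * Real.exp (-r ^ 2 / (4 * T))) - c * r * B := by
    have heq : ∀ w : ℝ, c * w * E w = c * ((w + r) * E w) - c * r * E w := by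
      intro w; ring
    rw [setIntegral_congr_fun measurableSet_Ioi fun w _ => heq w]
    rw [integral_sub (hAint.const_mul c) ((hexp1.integrableOn).const_mul (c * r))]
    rw [integral_const_mul, integral_const_mul, hAval, ← hBdef]
  -- assemble
  have hQ_ge : c * (2 * T * Real.exp (-r ^ 2 / (4 * T))) - c * r * S ≤ I := by
    have : c * (2 * T * Real.exp (-r ^ 2 / (4 * T))) - c * r * S
        ≤ c * (2 * T * Real.exp (-r ^ 2 / (4 * T))) - c * r * B := by
      have : c * r * B ≤ c * r * S := by
        apply mul_le_mul_of_nonneg_left hB_le (by positivity)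
      linarith
    linarith [hmono, hsplit ▸ le_refl (∫ w in Set.Ioi (0 : ℝ), c * w * E w), this, hsplit.ge.trans hmono]
  have hcrS : 0 < c * r * S := by positivity
  have hstep : 2 * T * Real.exp (-r ^ 2 / (4 * T)) / (r * S) - 1
      ≤ (c * r * S)⁻¹ * I := by
    have h := mul_le_mul_of_nonneg_left hQ_ge (le_of_lt (inv_pos.mpr hcrS))
    calc 2 * T * Real.exp (-r ^ 2 / (4 * T)) / (r * S) - 1
        = (c * r * S)⁻¹ * (c * (2 * T * Real.exp (-r ^ 2 / (4 * T))) - c * r * S) := by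
          field_simp
      _ ≤ (c * r * S)⁻¹ * I := h
  -- final algebra
  have hsqT : Real.sqrt T * Real.sqrt T = T := Real.mul_self_sqrt hT.le
  have hsqTpos : 0 < Real.sqrt T := Real.sqrt_pos.mpr hT
  have hsqπpos : 0 < Real.sqrt π := Real.sqrt_pos.mpr hπ
  have hSsplit : S = Real.sqrt π * Real.sqrt T := by
    rw [hSdef, Real.sqrt_mul hπ.le]
  have hfinal : 2 * T * Real.exp (-r ^ 2 / (4 * T)) / (r * S)
      = 2 * (Real.sqrt T / (r * Real.sqrt π) * Real.exp (-r ^ 2 / (4 * T))) := by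
    rw [hSsplit]
    rw [show 2 * T = 2 * (Real.sqrt T * Real.sqrt T) by rw [hsqT]]
    field_simp
  have htarget_nonneg : 0 ≤ Real.sqrt T / (r * Real.sqrt π) * Real.exp (-r ^ 2 / (4 * T)) := by
    positivity
  have := hstep
  rw [hfinal] at this
  linarith

end
end

section
/- Upper bound for the mass excess function: fix L > 0. There exists a constant C_L > 0 such that for all T, β > 0 with β√T ≤ L and all x ∈ ℝ³ \ {0}: Q_T^β(x) ≤ C_L · (1 + √T/|x|) · e^{−4πβ|x|}. -/
open MeasureTheory Real
open scoped Classical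

noncomputable section

lemma integral_Ioi_id_mul_exp_neg_mul_sq {c : ℝ} (hc : 0 < c) :
    ∫ s in Set.Ioi (0:ℝ), s * Real.exp (-c * s ^ 2) = (2 * c)⁻¹ := by
  have A : ∀ x ∈ Set.Ici (0:ℝ), HasDerivAt (fun t => -(2*c)⁻¹ * Real.exp (-c * t ^ 2))
      (x * Real.exp (-c * x ^ 2)) x := by
    intro x _
    have h1 : HasDerivAt (fun t : ℝ => -c * t ^ 2) (-c * (2 * x)) x := by
      simpa using (hasDerivAt_pow 2 x).const_mul (-c)
    have h2 := h1.exp.const_mul (-(2*c)⁻¹)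
    refine h2.congr_deriv ?_
    have h2c : (2*c)⁻¹ * (2*c) = 1 := inv_mul_cancel₀ (by positivity)
    linear_combination (x * Real.exp (-c * x ^ 2)) * h2c
  have hint : IntegrableOn (fun x : ℝ => x * Real.exp (-c * x ^ 2)) (Set.Ioi 0) :=
    (integrable_mul_exp_neg_mul_sq hc).integrableOn
  have ht : Filter.Tendsto (fun t : ℝ => -(2*c)⁻¹ * Real.exp (-c * t ^ 2))
      Filter.atTop (nhds 0) := by
    have h0 : Filter.Tendsto (fun t : ℝ => c * t ^ 2) Filter.atTop Filter.atTop :=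
      (Filter.tendsto_pow_atTop (by norm_num : (2:ℕ) ≠ 0)).const_mul_atTop hc
    have h1 : Filter.Tendsto (fun t : ℝ => Real.exp (-(c * t ^ 2))) Filter.atTop (nhds 0) :=
      Real.tendsto_exp_neg_atTop_nhds_zero.comp h0
    have h2 := h1.const_mul (-(2*c)⁻¹)
    simpa [neg_mul] using h2
  have := integral_Ioi_of_hasDerivAt_of_tendsto' A hint ht
  rw [this]
  simp

lemma integral_abs_mul_exp_neg_mul_sq {c : ℝ} (hc : 0 < c) :
    ∫ s : ℝ, |s| * Real.exp (-c * s ^ 2) = c⁻¹ := by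
  have h := integral_comp_abs (f := fun t : ℝ => t * Real.exp (-c * t ^ 2))
  simp only [sq_abs] at h
  rw [h, integral_Ioi_id_mul_exp_neg_mul_sq hc, mul_inv]
  field_simp

lemma I_bound {b T r : ℝ} (hb : 0 < b) (hT : 0 < T) (hr : 0 < r) :
    ∫ w in Set.Ioi (0:ℝ), (Real.exp (b*w) - 1) * Real.exp (-(r+w)^2/(4*T))
      ≤ b * Real.exp (b^2*T - b*r) * ((2*b*T + r) * (2 * Real.sqrt (π*T)) + 4*T) := by
  set a : ℝ := 2*b*T - r with ha
  set c : ℝ := (4*T)⁻¹ with hc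
  have hc0 : 0 < c := by positivity
  set K : ℝ := b * Real.exp (b^2*T - b*r) with hK
  have hK0 : 0 < K := by positivity
  set G : ℝ → ℝ := fun s => (|a| + |s|) * Real.exp (-c * s^2) with hG
  have hGnn : ∀ s, 0 ≤ G s := fun s => by positivity
  have hGint : Integrable G := by
    have h1 := (integrable_exp_neg_mul_sq hc0).const_mul |a|
    have h2 : Integrable (fun s : ℝ => |s| * Real.exp (-c * s^2)) := by
      have h3 := (integrable_mul_exp_neg_mul_sq hc0).abs
      simpa [abs_mul, abs_of_pos (Real.exp_pos _)] using h3
    simp only [hG, add_mul]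
    exact h1.add h2
  have hg : Integrable (fun w : ℝ => K * G (w - a)) := (hGint.comp_sub_right a).const_mul K
  have step1 : ∫ w in Set.Ioi (0:ℝ), (Real.exp (b*w) - 1) * Real.exp (-(r+w)^2/(4*T))
      ≤ ∫ w in Set.Ioi (0:ℝ), K * G (w - a) := by
    apply integral_mono_of_nonneg
    · filter_upwards [ae_restrict_mem measurableSet_Ioi] with w hw
      have hw0 : (0:ℝ) < w := hw
      have : (1:ℝ) ≤ Real.exp (b*w) := Real.one_le_exp (by positivity)
      have := sub_nonneg.2 this
      positivity
    · exact hg.integrableOn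
    · filter_upwards [ae_restrict_mem measurableSet_Ioi] with w hw
      have hw0 : (0:ℝ) < w := hw
      have hE := Real.exp_pos (b*w)
      have h1 : Real.exp (b*w) - 1 ≤ b*w*Real.exp (b*w) := by
        have h0 := Real.add_one_le_exp (-(b*w))
        rw [Real.exp_neg] at h0
        have h2 : Real.exp (b*w) * (Real.exp (b*w))⁻¹ = 1 := mul_inv_cancel₀ hE.ne'
        nlinarith [mul_le_mul_of_nonneg_left h0 hE.le]
      have hX := Real.exp_pos (-(r+w)^2/(4*T))
      have hexp : b*w + -(r+w)^2/(4*T) = (b^2*T - b*r) + -c*(w-a)^2 := by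
        rw [hc, ha]
        field_simp
        ring
      have key : b*w*Real.exp (b*w) * Real.exp (-(r+w)^2/(4*T))
          = K * (w * Real.exp (-c*(w-a)^2)) := by
        rw [hK, mul_assoc (b*w), ← Real.exp_add, hexp, Real.exp_add]
        ring
      calc (Real.exp (b*w) - 1) * Real.exp (-(r+w)^2/(4*T))
          ≤ b*w*Real.exp (b*w) * Real.exp (-(r+w)^2/(4*T)) :=
            mul_le_mul_of_nonneg_right h1 hX.le
        _ = K * (w * Real.exp (-c*(w-a)^2)) := key
        _ ≤ K * G (w - a) := by
            apply mul_le_mul_of_nonneg_left _ hK0.le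
            rw [hG]
            apply mul_le_mul_of_nonneg_right _ (Real.exp_pos _).le
            calc w = (w - a) + a := by ring
              _ ≤ |w - a| + |a| := add_le_add (le_abs_self _) (le_abs_self _)
              _ = |a| + |w - a| := by ring
  have step2 : ∫ w in Set.Ioi (0:ℝ), K * G (w - a) ≤ ∫ w : ℝ, K * G (w - a) :=
    setIntegral_le_integral hg (Filter.Eventually.of_forall fun w => by
      have := hGnn (w - a); positivity)
  have step3 : ∫ w : ℝ, K * G (w - a) = K * (|a| * (2 * Real.sqrt (π*T)) + 4*T) := by
    rw [integral_const_mul]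
    congr 1
    rw [integral_sub_right_eq_self G a]
    have e1 : ∫ s : ℝ, |a| * Real.exp (-c * s^2) = |a| * (2 * Real.sqrt (π*T)) := by
      rw [integral_const_mul, integral_gaussian]
      congr 1
      rw [show π / c = 4 * (π * T) by rw [hc]; field_simp]
      rw [show (4:ℝ) * (π*T) = 2^2 * (π*T) by norm_num, Real.sqrt_mul (by positivity),
        Real.sqrt_sq (by norm_num)]
    have e2 : ∫ s : ℝ, |s| * Real.exp (-c * s^2) = 4*T := by
      rw [integral_abs_mul_exp_neg_mul_sq hc0, hc, inv_inv]
    have hi1 : Integrable (fun s : ℝ => |a| * Real.exp (-c * s^2)) :=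
      (integrable_exp_neg_mul_sq hc0).const_mul |a|
    have hi2 : Integrable (fun s : ℝ => |s| * Real.exp (-c * s^2)) := by
      have h3 := (integrable_mul_exp_neg_mul_sq hc0).abs
      simpa [abs_mul, abs_of_pos (Real.exp_pos _)] using h3
    calc ∫ s, G s = ∫ s, (|a| * Real.exp (-c * s^2) + |s| * Real.exp (-c * s^2)) := by
          simp only [hG, add_mul]
      _ = (∫ s : ℝ, |a| * Real.exp (-c * s^2)) + ∫ s : ℝ, |s| * Real.exp (-c * s^2) :=
          integral_add hi1 hi2
      _ = |a| * (2 * Real.sqrt (π*T)) + 4*T := by rw [e1, e2]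
  have habs : |a| ≤ 2*b*T + r := by
    rw [ha]
    calc |2*b*T - r| ≤ |2*b*T| + |r| := abs_sub _ _
      _ = 2*b*T + r := by rw [abs_of_nonneg (by positivity), abs_of_nonneg hr.le]
  calc ∫ w in Set.Ioi (0:ℝ), (Real.exp (b*w) - 1) * Real.exp (-(r+w)^2/(4*T))
      ≤ ∫ w : ℝ, K * G (w - a) := step1.trans step2
    _ = K * (|a| * (2 * Real.sqrt (π*T)) + 4*T) := step3
    _ ≤ K * ((2*b*T + r) * (2 * Real.sqrt (π*T)) + 4*T) := by
        apply mul_le_mul_of_nonneg_left _ hK0.le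
        have : (0:ℝ) ≤ 2 * Real.sqrt (π*T) := by positivity
        nlinarith
    _ = b * Real.exp (b^2*T - b*r) * ((2*b*T + r) * (2 * Real.sqrt (π*T)) + 4*T) := by rw [hK]

set_option maxHeartbeats 1000000 in
theorem mass_excess_upper_bound (L : ℝ) (hL : 0 < L) :
    ∃ C > 0, ∀ T β : ℝ, 0 < T → 0 < β → β * Real.sqrt T ≤ L →
      ∀ x : E3, x ≠ 0 →
        Qbeta β T x ≤ C * (1 + Real.sqrt T / ‖x‖) * Real.exp (-(4 * π * β * ‖x‖)) := by
  have hπ := Real.pi_pos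
  refine ⟨Real.exp (16*π^2*L^2) * (2 + 16*π*L + 4/Real.sqrt π), ?_, ?_⟩
  · have h1 : 0 < 16*π*L := by positivity
    have h2 : 0 ≤ 4/Real.sqrt π := by positivity
    have h3 : 0 < 2 + 16*π*L + 4/Real.sqrt π := by linarith
    exact mul_pos (Real.exp_pos _) h3
  · intro T β hT hβ hβT x hx
    set r : ℝ := ‖x‖ with hr'
    have hr : 0 < r := by simpa [hr'] using norm_pos_iff.2 hx
    set b : ℝ := 4*π*β with hb'
    have hb : 0 < b := by positivity
    set s : ℝ := Real.sqrt T with hs'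
    have hs : 0 < s := Real.sqrt_pos.2 hT
    have hs2 : s^2 = T := Real.sq_sqrt hT.le
    set p : ℝ := Real.sqrt π with hp'
    have hp : 0 < p := Real.sqrt_pos.2 hπ
    set u : ℝ := Real.sqrt (π*T) with hu'
    have hu : u = p * s := by rw [hu', hp', hs', Real.sqrt_mul hπ.le]
    have hu0 : 0 < u := by rw [hu]; positivity
    set M : ℝ := (2*b*T + r) * (2 * u) + 4*T with hM
    have hM0 : 0 < M := by positivity
    have hI := I_bound hb hT hr
    rw [Qbeta, if_neg hT.ne']
    have hQ : (4 * π * β * ‖x‖ * Real.sqrt (π * T))⁻¹ *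
        (∫ w in Set.Ioi (0 : ℝ),
          (Real.exp (4 * π * β * w) - 1) * Real.exp (-(‖x‖ + w) ^ 2 / (4 * T)))
        ≤ (b*r*u)⁻¹ * (b * Real.exp (b^2*T - b*r) * M) := by
      apply mul_le_mul_of_nonneg_left _ (by positivity)
      exact hI
    refine hQ.trans ?_
    have rearr : (b*r*u)⁻¹ * (b * Real.exp (b^2*T - b*r) * M)
        = (M/(r*u)) * Real.exp (b^2*T) * Real.exp (-(b*r)) := by
      rw [show b^2*T - b*r = b^2*T + -(b*r) by ring, Real.exp_add]
      field_simp
    rw [rearr]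
    have h1 : Real.exp (b^2*T) ≤ Real.exp (16*π^2*L^2) := by
      apply Real.exp_le_exp.2
      have e1 : b^2*T = 16*π^2*(β*s)^2 := by rw [hb', ← hs2]; ring
      have e2 : (β*s)^2 ≤ L^2 := pow_le_pow_left₀ (by positivity) hβT 2
      have e0 : (0:ℝ) ≤ 16*π^2 := by positivity
      rw [e1]
      nlinarith
    have h2 : M/(r*u) ≤ (2 + 16*π*L + 4/p) * (1 + s/r) := by
      have expand : M/(r*u) = 4*b*T/r + 2 + 4*T/(r*u) := by
        rw [hM]; field_simp; ring
      have e3 : 4*b*T/r ≤ 16*π*L*(s/r) := by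
        rw [← mul_div_assoc]
        apply (div_le_div_iff_of_pos_right hr).2
        rw [hb', ← hs2]
        nlinarith [mul_le_mul_of_nonneg_left hβT (by positivity : (0:ℝ) ≤ 16*π*s)]
      have e4 : 4*T/(r*u) = 4/p*(s/r) := by
        rw [hu, ← hs2]; field_simp
      have hπL : (0:ℝ) ≤ 16*π*L := by positivity
      have hsr : (0:ℝ) ≤ s/r := by positivity
      have hp4 : (0:ℝ) ≤ 4/p := by positivity
      rw [expand, e4]
      nlinarith [mul_nonneg hπL hsr, mul_nonneg hp4 hsr]
    calc M/(r*u) * Real.exp (b^2*T) * Real.exp (-(b*r))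
        ≤ ((2 + 16*π*L + 4/p) * (1 + s/r)) * Real.exp (16*π^2*L^2) * Real.exp (-(b*r)) := by
          apply mul_le_mul_of_nonneg_right _ (Real.exp_pos _).le
          exact mul_le_mul h2 h1 (Real.exp_pos _).le (by positivity)
      _ = Real.exp (16*π^2*L^2) * (2 + 16*π*L + 4/p) * (1 + s/r) * Real.exp (-(b*r)) := by
          ring

end
end

section
/- Regime-split gradient bound: fix L > 0. There exists a constant C_L > 0 such that for all T, β > 0 with β√T ≤ L, the function x ↦ Q_T^β(x) is differentiable at every x ∈ ℝ³ \ {0} and ‖∇Q_T^β(x)‖ ≤ C_L · [ ((1+√T)/|x|²) · 1_{|x| ≤ √T} + (1/|x| + 1/(|x|√T)) · 1_{|x| > √T} ] · e^{−4πβ|x|}. -/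
open MeasureTheory Real
open scoped Classical

noncomputable section

lemma exp_sub_one_le_mul (x : ℝ) : Real.exp x - 1 ≤ x * Real.exp x := by
  have h := Real.add_one_le_exp (-x)
  have h2 : (-x + 1) * Real.exp x ≤ Real.exp (-x) * Real.exp x :=
    mul_le_mul_of_nonneg_right h (Real.exp_nonneg x)
  rw [← Real.exp_add, neg_add_cancel, Real.exp_zero] at h2
  nlinarith [Real.exp_pos x]

lemma integrable_gauss_shift (b c : ℝ) (hb : 0 < b) :
    Integrable (fun w : ℝ => Real.exp (-b * (w + c) ^ 2)) :=
  (integrable_exp_neg_mul_sq hb).comp_add_right c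

lemma integral_gauss_shift (b c : ℝ) (hb : 0 < b) :
    ∫ w : ℝ, Real.exp (-b * (w + c) ^ 2) = Real.sqrt (π / b) := by
  rw [integral_add_right_eq_self (fun u : ℝ => Real.exp (-b * u ^ 2)) c, integral_gaussian]

lemma integrable_exp_lin_quad (a b : ℝ) (hb : 0 < b) :
    Integrable (fun w : ℝ => Real.exp (a * w - b * w ^ 2)) := by
  have h : (fun w : ℝ => Real.exp (a * w - b * w ^ 2)) =
      fun w => Real.exp (a ^ 2 / (4 * b)) * Real.exp (-b * (w + -(a / (2 * b))) ^ 2) := by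
    funext w
    rw [← Real.exp_add]
    congr 1
    field_simp
    ring
  rw [h]
  exact (integrable_gauss_shift b _ hb).const_mul _

lemma abs_mul_gauss_le {T : ℝ} (hT : 0 < T) (u : ℝ) :
    |u| * Real.exp (-(8 * T)⁻¹ * u ^ 2) ≤ 3 * Real.sqrt T := by
  have hs : 0 < Real.sqrt T := Real.sqrt_pos.mpr hT
  have hs2 : Real.sqrt T ^ 2 = T := Real.sq_sqrt hT.le
  have h8 : (0:ℝ) < 8 * T := by linarith
  have key : |u| ≤ 3 * Real.sqrt T * ((8 * T)⁻¹ * u ^ 2 + 1) := by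
    have hq := sq_nonneg (|u| - 2 * Real.sqrt T)
    have hu2 : |u| ^ 2 = u ^ 2 := sq_abs u
    have heq : 3 * Real.sqrt T * ((8 * T)⁻¹ * u ^ 2 + 1)
        = (3 * Real.sqrt T * u ^ 2 + 3 * Real.sqrt T * (8 * T)) / (8 * T) := by
      field_simp
    rw [heq, le_div_iff₀ h8]
    nlinarith [mul_nonneg hs.le hq, hs, hs2, hu2, sq_nonneg u, abs_nonneg u]
  have key2 : |u| ≤ 3 * Real.sqrt T * Real.exp ((8 * T)⁻¹ * u ^ 2) := by
    calc |u| ≤ 3 * Real.sqrt T * ((8 * T)⁻¹ * u ^ 2 + 1) := key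
      _ ≤ 3 * Real.sqrt T * Real.exp ((8 * T)⁻¹ * u ^ 2) := by
          have := Real.add_one_le_exp ((8 * T)⁻¹ * u ^ 2)
          gcongr
  calc |u| * Real.exp (-(8 * T)⁻¹ * u ^ 2)
      ≤ 3 * Real.sqrt T * Real.exp ((8 * T)⁻¹ * u ^ 2) * Real.exp (-(8 * T)⁻¹ * u ^ 2) :=
        mul_le_mul_of_nonneg_right key2 (Real.exp_nonneg _)
    _ = 3 * Real.sqrt T := by
        rw [mul_assoc, ← Real.exp_add]
        simp

lemma sq_mul_gauss_le {T : ℝ} (hT : 0 < T) (u : ℝ) :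
    u ^ 2 * Real.exp (-(8 * T)⁻¹ * u ^ 2) ≤ 8 * T := by
  have h8 : (0:ℝ) < 8 * T := by linarith
  have h := Real.add_one_le_exp ((8 * T)⁻¹ * u ^ 2)
  have key : u ^ 2 ≤ 8 * T * Real.exp ((8 * T)⁻¹ * u ^ 2) := by
    calc u ^ 2 = 8 * T * ((8 * T)⁻¹ * u ^ 2) := by field_simp
      _ ≤ 8 * T * Real.exp ((8 * T)⁻¹ * u ^ 2) := by gcongr; nlinarith [Real.exp_nonneg ((8 * T)⁻¹ * u ^ 2)]
  calc u ^ 2 * Real.exp (-(8 * T)⁻¹ * u ^ 2)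
      ≤ 8 * T * Real.exp ((8 * T)⁻¹ * u ^ 2) * Real.exp (-(8 * T)⁻¹ * u ^ 2) :=
        mul_le_mul_of_nonneg_right key (Real.exp_nonneg _)
    _ = 8 * T := by
        rw [mul_assoc, ← Real.exp_add]
        simp

set_option maxHeartbeats 1000000 in
theorem aux_key (L T β : ℝ) (hL : 0 < L) (hT : 0 < T) (hβ : 0 < β)
    (hβL : β * Real.sqrt T ≤ L) (r : ℝ) (hr : 0 < r) :
    ∃ D : ℝ,
      HasDerivAt (fun ρ : ℝ => (4 * π * β * ρ * Real.sqrt (π * T))⁻¹ *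
          ∫ w in Set.Ioi (0 : ℝ),
            (Real.exp (4 * π * β * w) - 1) * Real.exp (-(ρ + w) ^ 2 / (4 * T))) D r ∧
      |D| ≤ (66 + 156 * L + 4056 * L ^ 2) * Real.exp (169 * L ^ 2) *
          (Real.sqrt T / r ^ 2 + 1 / r) * Real.exp (-(4 * π * β * r)) := by
  have hπ := Real.pi_pos
  have hπ15 := Real.pi_lt_d2
  have hπ3 := Real.pi_gt_three
  set a := 4 * π * β with ha_def
  have ha : 0 < a := by positivity
  have hs : 0 < Real.sqrt T := Real.sqrt_pos.mpr hT
  have hs2 : Real.sqrt T ^ 2 = T := Real.sq_sqrt hT.le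
  have hss : Real.sqrt T * Real.sqrt T = T := Real.mul_self_sqrt hT.le
  have haT : a * Real.sqrt T ≤ 13 * L := by
    have : a * Real.sqrt T = 4 * π * (β * Real.sqrt T) := by ring
    rw [this]
    nlinarith [mul_pos hβ hs]
  have ha2T : a ^ 2 * T ≤ 169 * L ^ 2 := by
    nlinarith [mul_pos ha hs, mul_pos hL hL]
  have h4T : (0:ℝ) < 4 * T := by linarith
  have h8T : (0:ℝ) < 8 * T := by linarith
  -- the parametrized integrand and its ρ-derivative
  set F : ℝ → ℝ → ℝ := fun ρ w => (Real.exp (a * w) - 1) * Real.exp (-(ρ + w) ^ 2 / (4 * T))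
    with hF_def
  set F' : ℝ → ℝ → ℝ := fun ρ w =>
      (Real.exp (a * w) - 1) * (Real.exp (-(ρ + w) ^ 2 / (4 * T)) * (-((ρ + w) / (2 * T))))
    with hF'_def
  have hFcont : ∀ ρ : ℝ, Continuous (F ρ) := by
    intro ρ
    rw [hF_def]
    fun_prop
  have hF'cont : ∀ ρ : ℝ, Continuous (F' ρ) := by
    intro ρ
    rw [hF'_def]
    fun_prop
  -- the uniform local bound for the derivative
  have hboundD_int : Integrable (fun w => (2 * T)⁻¹ *
      (2 * r * Real.exp (a * w - (4 * T)⁻¹ * w ^ 2)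
        + 3 * Real.sqrt T * Real.exp (a * w - (8 * T)⁻¹ * w ^ 2)))
      (volume.restrict (Set.Ioi (0:ℝ))) := by
    refine Integrable.restrict ?_
    exact ((((integrable_exp_lin_quad a (4 * T)⁻¹ (by positivity)).const_mul (2 * r)).add
      ((integrable_exp_lin_quad a (8 * T)⁻¹ (by positivity)).const_mul
        (3 * Real.sqrt T))).const_mul _)
  have h_bound : ∀ᵐ w ∂(volume.restrict (Set.Ioi (0:ℝ))), ∀ ρ ∈ Metric.ball r r,
      ‖F' ρ w‖ ≤ (2 * T)⁻¹ * (2 * r * Real.exp (a * w - (4 * T)⁻¹ * w ^ 2)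
        + 3 * Real.sqrt T * Real.exp (a * w - (8 * T)⁻¹ * w ^ 2)) := by
    rw [ae_restrict_iff' measurableSet_Ioi]
    refine Filter.Eventually.of_forall fun w hw => ?_
    intro ρ hρ
    rw [Metric.mem_ball, Real.dist_eq, abs_lt] at hρ
    have hρ0 : 0 < ρ := by linarith [hρ.1]
    have hρ2 : ρ < 2 * r := by linarith [hρ.2]
    have hw0 : 0 < w := hw
    have he1 : (1:ℝ) ≤ Real.exp (a * w) := Real.one_le_exp (by positivity)
    have habs : ‖F' ρ w‖ =
        (Real.exp (a * w) - 1) * (Real.exp (-(ρ + w) ^ 2 / (4 * T)) * ((ρ + w) / (2 * T))) := by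
      rw [hF'_def]
      simp only [Real.norm_eq_abs, abs_mul]
      rw [abs_of_nonneg (by linarith : (0:ℝ) ≤ Real.exp (a * w) - 1),
        abs_of_nonneg (Real.exp_nonneg _), abs_neg,
        abs_of_nonneg (by positivity : (0:ℝ) ≤ (ρ + w) / (2 * T))]
    rw [habs]
    have hexple : Real.exp (-(ρ + w) ^ 2 / (4 * T)) ≤ Real.exp (-((4 * T)⁻¹ * w ^ 2)) := by
      apply Real.exp_le_exp.2
      rw [div_le_iff₀ h4T] at *
      have : -((4 * T)⁻¹ * w ^ 2) * (4 * T) = -w ^ 2 := by field_simp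
      nlinarith [sq_nonneg (ρ + w), sq_nonneg w]
    calc (Real.exp (a * w) - 1) * (Real.exp (-(ρ + w) ^ 2 / (4 * T)) * ((ρ + w) / (2 * T)))
        ≤ Real.exp (a * w) * (Real.exp (-((4 * T)⁻¹ * w ^ 2)) * ((2 * r + w) / (2 * T))) := by
          apply mul_le_mul (by linarith) ?_ (by positivity) (Real.exp_nonneg _)
          apply mul_le_mul hexple ?_ (by positivity) (Real.exp_nonneg _)
          gcongr
      _ = (2 * T)⁻¹ * (2 * r * Real.exp (a * w - (4 * T)⁻¹ * w ^ 2)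
            + w * Real.exp (a * w - (4 * T)⁻¹ * w ^ 2)) := by
          rw [Real.exp_sub]
          rw [Real.exp_neg ((4 * T)⁻¹ * w ^ 2)]
          field_simp
      _ ≤ (2 * T)⁻¹ * (2 * r * Real.exp (a * w - (4 * T)⁻¹ * w ^ 2)
            + 3 * Real.sqrt T * Real.exp (a * w - (8 * T)⁻¹ * w ^ 2)) := by
          apply mul_le_mul_of_nonneg_left ?_ (by positivity)
          apply add_le_add le_rfl
          have h3 : w * Real.exp (-(8 * T)⁻¹ * w ^ 2) ≤ 3 * Real.sqrt T := by
            have := abs_mul_gauss_le hT w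
            rwa [abs_of_pos hw0] at this
          calc w * Real.exp (a * w - (4 * T)⁻¹ * w ^ 2)
              = w * Real.exp (-(8 * T)⁻¹ * w ^ 2) * Real.exp (a * w - (8 * T)⁻¹ * w ^ 2) := by
                rw [mul_assoc w (Real.exp (-(8 * T)⁻¹ * w ^ 2))
                  (Real.exp (a * w - (8 * T)⁻¹ * w ^ 2)), ← Real.exp_add]
                congr 1
                field_simp
                ring
            _ ≤ 3 * Real.sqrt T * Real.exp (a * w - (8 * T)⁻¹ * w ^ 2) := by
                exact mul_le_mul_of_nonneg_right h3 (Real.exp_nonneg _)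
  -- integrability of F r
  have hFint : Integrable (F r) (volume.restrict (Set.Ioi (0:ℝ))) := by
    apply Integrable.mono' ((integrable_exp_lin_quad a (4 * T)⁻¹ (by positivity)).restrict
      (s := Set.Ioi (0:ℝ))) ((hFcont r).aestronglyMeasurable)
    rw [ae_restrict_iff' measurableSet_Ioi]
    refine Filter.Eventually.of_forall fun w hw => ?_
    have hw0 : 0 < w := hw
    have he1 : (1:ℝ) ≤ Real.exp (a * w) := Real.one_le_exp (by positivity)
    have hexple : Real.exp (-(r + w) ^ 2 / (4 * T)) ≤ Real.exp (-((4 * T)⁻¹ * w ^ 2)) := by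
      apply Real.exp_le_exp.2
      rw [div_le_iff₀ h4T] at *
      have : -((4 * T)⁻¹ * w ^ 2) * (4 * T) = -w ^ 2 := by field_simp
      nlinarith [sq_nonneg w]
    rw [hF_def]
    simp only [Real.norm_eq_abs]
    rw [abs_mul, abs_of_nonneg (by linarith : (0:ℝ) ≤ Real.exp (a * w) - 1),
      abs_of_nonneg (Real.exp_nonneg _)]
    calc (Real.exp (a * w) - 1) * Real.exp (-(r + w) ^ 2 / (4 * T))
        ≤ Real.exp (a * w) * Real.exp (-((4 * T)⁻¹ * w ^ 2)) :=
          mul_le_mul (by linarith) hexple (Real.exp_nonneg _) (Real.exp_nonneg _)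
      _ = Real.exp (a * w - (4 * T)⁻¹ * w ^ 2) := by
          rw [← Real.exp_add]
          ring_nf
  -- differentiation under the integral sign
  have hdiff := hasDerivAt_integral_of_dominated_loc_of_deriv_le
    (μ := volume.restrict (Set.Ioi (0:ℝ))) (F := F) (F' := F') (x₀ := r)
    (bound := fun w => (2 * T)⁻¹ * (2 * r * Real.exp (a * w - (4 * T)⁻¹ * w ^ 2)
        + 3 * Real.sqrt T * Real.exp (a * w - (8 * T)⁻¹ * w ^ 2)))
    (Metric.ball_mem_nhds r hr) (Filter.Eventually.of_forall fun ρ => (hFcont ρ).aestronglyMeasurable)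
    hFint ((hF'cont r).aestronglyMeasurable) h_bound hboundD_int
    (Filter.Eventually.of_forall fun w => fun ρ _ => by
      rw [hF_def, hF'_def]
      have h1 : HasDerivAt (fun ρ : ℝ => -(ρ + w) ^ 2 / (4 * T))
          (-(2 * (ρ + w) ^ 1 * 1) / (4 * T)) ρ :=
        (((hasDerivAt_id ρ).add_const w).pow 2).neg.div_const (4 * T)
      have h2 := (h1.exp).const_mul (Real.exp (a * w) - 1)
      convert h2 using 1
      · rfl
      · beta_reduce
        ring)
  obtain ⟨hF'int, hJd⟩ := hdiff
  -- the Gaussian splitting identity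
  have hsplit : ∀ w : ℝ, Real.exp (a * w) * Real.exp (-(r + w) ^ 2 / (4 * T)) =
      Real.exp (a ^ 2 * T - a * r) *
        (Real.exp (-(8 * T)⁻¹ * (w + (r - 2 * a * T)) ^ 2) *
          Real.exp (-(8 * T)⁻¹ * (w + (r - 2 * a * T)) ^ 2)) := by
    intro w
    rw [← Real.exp_add, ← Real.exp_add, ← Real.exp_add]
    congr 1
    field_simp
    ring
  -- pointwise bound for F r
  have hFle : ∀ w ∈ Set.Ioi (0:ℝ), ‖F r w‖ ≤
      a * Real.exp (a ^ 2 * T - a * r) * (3 * Real.sqrt T + 2 * a * T) *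
        Real.exp (-(8 * T)⁻¹ * (w + (r - 2 * a * T)) ^ 2) := by
    intro w hw
    have hw0 : 0 < w := hw
    have he1 : (1:ℝ) ≤ Real.exp (a * w) := Real.one_le_exp (by positivity)
    have hE1pos : (0:ℝ) ≤ Real.exp (-(8 * T)⁻¹ * (w + (r - 2 * a * T)) ^ 2) :=
      Real.exp_nonneg _
    have hE1le1 : Real.exp (-(8 * T)⁻¹ * (w + (r - 2 * a * T)) ^ 2) ≤ 1 := by
      rw [show (1:ℝ) = Real.exp 0 from (Real.exp_zero).symm]
      apply Real.exp_le_exp.2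
      have : (0:ℝ) ≤ (8 * T)⁻¹ * (w + (r - 2 * a * T)) ^ 2 := by positivity
      linarith
    have hwle : w ≤ |w + (r - 2 * a * T)| + 2 * a * T := by
      have := le_abs_self (w + (r - 2 * a * T))
      linarith
    have habsE : |w + (r - 2 * a * T)| * Real.exp (-(8 * T)⁻¹ * (w + (r - 2 * a * T)) ^ 2)
        ≤ 3 * Real.sqrt T := abs_mul_gauss_le hT _
    rw [hF_def]
    simp only [Real.norm_eq_abs]
    rw [abs_mul, abs_of_nonneg (by linarith : (0:ℝ) ≤ Real.exp (a * w) - 1),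
      abs_of_nonneg (Real.exp_nonneg _)]
    calc (Real.exp (a * w) - 1) * Real.exp (-(r + w) ^ 2 / (4 * T))
        ≤ a * w * Real.exp (a * w) * Real.exp (-(r + w) ^ 2 / (4 * T)) :=
          mul_le_mul_of_nonneg_right (exp_sub_one_le_mul _) (Real.exp_nonneg _)
      _ = a * w * (Real.exp (a * w) * Real.exp (-(r + w) ^ 2 / (4 * T))) := by ring
      _ = a * w * (Real.exp (a ^ 2 * T - a * r) *
            (Real.exp (-(8 * T)⁻¹ * (w + (r - 2 * a * T)) ^ 2) *
              Real.exp (-(8 * T)⁻¹ * (w + (r - 2 * a * T)) ^ 2))) := by rw [hsplit w]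
      _ ≤ a * (|w + (r - 2 * a * T)| + 2 * a * T) * (Real.exp (a ^ 2 * T - a * r) *
            (Real.exp (-(8 * T)⁻¹ * (w + (r - 2 * a * T)) ^ 2) *
              Real.exp (-(8 * T)⁻¹ * (w + (r - 2 * a * T)) ^ 2))) := by
          apply mul_le_mul_of_nonneg_right ?_ (by positivity)
          exact mul_le_mul_of_nonneg_left hwle ha.le
      _ = a * Real.exp (a ^ 2 * T - a * r) *
            ((|w + (r - 2 * a * T)| * Real.exp (-(8 * T)⁻¹ * (w + (r - 2 * a * T)) ^ 2)) *
                Real.exp (-(8 * T)⁻¹ * (w + (r - 2 * a * T)) ^ 2)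
              + (2 * a * T) * (Real.exp (-(8 * T)⁻¹ * (w + (r - 2 * a * T)) ^ 2) *
                Real.exp (-(8 * T)⁻¹ * (w + (r - 2 * a * T)) ^ 2))) := by ring
      _ ≤ a * Real.exp (a ^ 2 * T - a * r) *
            ((3 * Real.sqrt T) * Real.exp (-(8 * T)⁻¹ * (w + (r - 2 * a * T)) ^ 2)
              + (2 * a * T) * (1 * Real.exp (-(8 * T)⁻¹ * (w + (r - 2 * a * T)) ^ 2))) := by
          apply mul_le_mul_of_nonneg_left ?_ (by positivity)
          apply add_le_add
          · exact mul_le_mul_of_nonneg_right habsE hE1pos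
          · exact mul_le_mul_of_nonneg_left
              (mul_le_mul_of_nonneg_right hE1le1 hE1pos) (by positivity)
      _ = a * Real.exp (a ^ 2 * T - a * r) * (3 * Real.sqrt T + 2 * a * T) *
            Real.exp (-(8 * T)⁻¹ * (w + (r - 2 * a * T)) ^ 2) := by ring
  -- pointwise bound for F' r
  have hF'le : ∀ w ∈ Set.Ioi (0:ℝ), ‖F' r w‖ ≤
      a * Real.exp (a ^ 2 * T - a * r) * (8 + 4 * a ^ 2 * T) *
        Real.exp (-(8 * T)⁻¹ * (w + (r - 2 * a * T)) ^ 2) := by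
    intro w hw
    have hw0 : 0 < w := hw
    have he1 : (1:ℝ) ≤ Real.exp (a * w) := Real.one_le_exp (by positivity)
    have hE1pos : (0:ℝ) ≤ Real.exp (-(8 * T)⁻¹ * (w + (r - 2 * a * T)) ^ 2) :=
      Real.exp_nonneg _
    have hE1le1 : Real.exp (-(8 * T)⁻¹ * (w + (r - 2 * a * T)) ^ 2) ≤ 1 := by
      rw [show (1:ℝ) = Real.exp 0 from (Real.exp_zero).symm]
      apply Real.exp_le_exp.2
      have : (0:ℝ) ≤ (8 * T)⁻¹ * (w + (r - 2 * a * T)) ^ 2 := by positivity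
      linarith
    have hsqE : (w + (r - 2 * a * T)) ^ 2 * Real.exp (-(8 * T)⁻¹ * (w + (r - 2 * a * T)) ^ 2)
        ≤ 8 * T := sq_mul_gauss_le hT _
    have habs2 : ‖F' r w‖ =
        (Real.exp (a * w) - 1) * (Real.exp (-(r + w) ^ 2 / (4 * T)) * ((r + w) / (2 * T))) := by
      rw [hF'_def]
      simp only [Real.norm_eq_abs, abs_mul]
      rw [abs_of_nonneg (by linarith : (0:ℝ) ≤ Real.exp (a * w) - 1),
        abs_of_nonneg (Real.exp_nonneg _), abs_neg,
        abs_of_nonneg (by positivity : (0:ℝ) ≤ (r + w) / (2 * T))]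
    rw [habs2]
    calc (Real.exp (a * w) - 1) * (Real.exp (-(r + w) ^ 2 / (4 * T)) * ((r + w) / (2 * T)))
        ≤ a * w * Real.exp (a * w) * (Real.exp (-(r + w) ^ 2 / (4 * T)) * ((r + w) / (2 * T))) :=
          mul_le_mul_of_nonneg_right (exp_sub_one_le_mul _) (by positivity)
      _ ≤ a * (r + w) * Real.exp (a * w) *
            (Real.exp (-(r + w) ^ 2 / (4 * T)) * ((r + w) / (2 * T))) := by
          apply mul_le_mul_of_nonneg_right ?_ (by positivity)
          apply mul_le_mul_of_nonneg_right ?_ (Real.exp_nonneg _)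
          exact mul_le_mul_of_nonneg_left (by linarith) ha.le
      _ = a * (2 * T)⁻¹ * ((r + w) ^ 2 *
            (Real.exp (a * w) * Real.exp (-(r + w) ^ 2 / (4 * T)))) := by ring
      _ = a * (2 * T)⁻¹ * ((r + w) ^ 2 * (Real.exp (a ^ 2 * T - a * r) *
            (Real.exp (-(8 * T)⁻¹ * (w + (r - 2 * a * T)) ^ 2) *
              Real.exp (-(8 * T)⁻¹ * (w + (r - 2 * a * T)) ^ 2)))) := by rw [hsplit w]
      _ ≤ a * (2 * T)⁻¹ * ((2 * (w + (r - 2 * a * T)) ^ 2 + 8 * a ^ 2 * T ^ 2) *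
            (Real.exp (a ^ 2 * T - a * r) *
            (Real.exp (-(8 * T)⁻¹ * (w + (r - 2 * a * T)) ^ 2) *
              Real.exp (-(8 * T)⁻¹ * (w + (r - 2 * a * T)) ^ 2)))) := by
          apply mul_le_mul_of_nonneg_left ?_ (by positivity)
          apply mul_le_mul_of_nonneg_right ?_ (by positivity)
          nlinarith [sq_nonneg (w + (r - 2 * a * T) - 2 * a * T)]
      _ = a * (2 * T)⁻¹ * Real.exp (a ^ 2 * T - a * r) *
            (2 * (((w + (r - 2 * a * T)) ^ 2 *
                Real.exp (-(8 * T)⁻¹ * (w + (r - 2 * a * T)) ^ 2)) *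
                Real.exp (-(8 * T)⁻¹ * (w + (r - 2 * a * T)) ^ 2))
              + 8 * a ^ 2 * T ^ 2 * (Real.exp (-(8 * T)⁻¹ * (w + (r - 2 * a * T)) ^ 2) *
                Real.exp (-(8 * T)⁻¹ * (w + (r - 2 * a * T)) ^ 2))) := by ring
      _ ≤ a * (2 * T)⁻¹ * Real.exp (a ^ 2 * T - a * r) *
            (2 * ((8 * T) * Real.exp (-(8 * T)⁻¹ * (w + (r - 2 * a * T)) ^ 2))
              + 8 * a ^ 2 * T ^ 2 *
                (1 * Real.exp (-(8 * T)⁻¹ * (w + (r - 2 * a * T)) ^ 2))) := by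
          apply mul_le_mul_of_nonneg_left ?_ (by positivity)
          apply add_le_add
          · apply mul_le_mul_of_nonneg_left ?_ (by norm_num)
            exact mul_le_mul_of_nonneg_right hsqE hE1pos
          · exact mul_le_mul_of_nonneg_left
              (mul_le_mul_of_nonneg_right hE1le1 hE1pos) (by positivity)
      _ = a * Real.exp (a ^ 2 * T - a * r) * (8 + 4 * a ^ 2 * T) *
            Real.exp (-(8 * T)⁻¹ * (w + (r - 2 * a * T)) ^ 2) := by
          field_simp
          ring
  -- integral bounds
  have hGint : ∀ C : ℝ, Integrable (fun w : ℝ =>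
      C * Real.exp (-(8 * T)⁻¹ * (w + (r - 2 * a * T)) ^ 2)) volume := fun C =>
    (integrable_gauss_shift (8 * T)⁻¹ (r - 2 * a * T) (by positivity)).const_mul C
  have hdiv_inv : ∀ x y : ℝ, x / y⁻¹ = x * y := fun x y => by
    rw [div_eq_mul_inv, inv_inv]
  have hGval : ∀ C : ℝ, 0 ≤ C → ∫ w : ℝ, C * Real.exp (-(8 * T)⁻¹ * (w + (r - 2 * a * T)) ^ 2)
      ≤ C * (6 * Real.sqrt T) := by
    intro C hC
    rw [MeasureTheory.integral_const_mul, integral_gauss_shift _ _ (by positivity)]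
    apply mul_le_mul_of_nonneg_left ?_ hC
    rw [hdiv_inv π (8 * T)]
    calc Real.sqrt (π * (8 * T)) ≤ Real.sqrt (36 * T) := Real.sqrt_le_sqrt (by nlinarith)
      _ = 6 * Real.sqrt T := by
          rw [show (36:ℝ) * T = 6 ^ 2 * T by norm_num,
            Real.sqrt_mul (by norm_num : (0:ℝ) ≤ 6 ^ 2),
            Real.sqrt_sq (by norm_num : (0:ℝ) ≤ 6)]
  have hsetle : ∀ C : ℝ, 0 ≤ C →
      (∫ w in Set.Ioi (0:ℝ), C * Real.exp (-(8 * T)⁻¹ * (w + (r - 2 * a * T)) ^ 2))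
        ≤ C * (6 * Real.sqrt T) := by
    intro C hC
    refine le_trans (setIntegral_le_integral (hGint C) ?_) (hGval C hC)
    exact Filter.Eventually.of_forall fun w => by positivity
  have hAle : ‖∫ w in Set.Ioi (0:ℝ), F r w‖ ≤
      a * Real.exp (a ^ 2 * T - a * r) * (3 * Real.sqrt T + 2 * a * T) * (6 * Real.sqrt T) := by
    refine le_trans (norm_integral_le_of_norm_le ((hGint _).restrict) ?_) (hsetle _ (by positivity))
    rw [ae_restrict_iff' measurableSet_Ioi]
    exact Filter.Eventually.of_forall hFle
  have hBle : ‖∫ w in Set.Ioi (0:ℝ), F' r w‖ ≤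
      a * Real.exp (a ^ 2 * T - a * r) * (8 + 4 * a ^ 2 * T) * (6 * Real.sqrt T) := by
    refine le_trans (norm_integral_le_of_norm_le ((hGint _).restrict) ?_) (hsetle _ (by positivity))
    rw [ae_restrict_iff' measurableSet_Ioi]
    exact Filter.Eventually.of_forall hF'le
  -- assemble the derivative of the full function
  have hu0 : HasDerivAt (fun ρ : ℝ => a * ρ) a r := by
    simpa using (hasDerivAt_id r).const_mul a
  have hu := hu0.mul_const (Real.sqrt (π * T))
  have hpp : (0:ℝ) < Real.sqrt (π * T) := Real.sqrt_pos.mpr (by positivity)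
  have hne : a * r * Real.sqrt (π * T) ≠ 0 := by positivity
  have hinv := hu.inv hne
  have hfull := hinv.mul hJd
  refine ⟨_, hfull, ?_⟩
  beta_reduce
  rw [Real.norm_eq_abs] at hAle hBle
  have hE0 : Real.exp (a ^ 2 * T - a * r) ≤ Real.exp (169 * L ^ 2) * Real.exp (-(a * r)) := by
    rw [← Real.exp_add]
    exact Real.exp_le_exp.2 (by linarith)
  have hps : Real.sqrt T ≤ Real.sqrt (π * T) := Real.sqrt_le_sqrt (by nlinarith)
  have hcoef : -(a * Real.sqrt (π * T)) / (a * r * Real.sqrt (π * T)) ^ 2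
      = -((a * Real.sqrt (π * T) * r ^ 2)⁻¹) := by
    rw [neg_div]
    congr 1
    rw [eq_comm, inv_eq_iff_eq_inv, eq_comm, inv_div]
    field_simp
  set A := ∫ (w : ℝ) in Set.Ioi (0:ℝ), F r w with hA_def
  set B := ∫ (w : ℝ) in Set.Ioi (0:ℝ), F' r w with hB_def
  have step1 : |(-(a * Real.sqrt (π * T)) / (a * r * Real.sqrt (π * T)) ^ 2 * A)
        + (a * r * Real.sqrt (π * T))⁻¹ * B|
      ≤ (a * Real.sqrt (π * T) * r ^ 2)⁻¹ * |A| + (a * r * Real.sqrt (π * T))⁻¹ * |B| := by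
    refine (abs_add_le _ _).trans ?_
    rw [hcoef, neg_mul, abs_neg, abs_mul, abs_mul,
      abs_of_pos (show (0:ℝ) < (a * Real.sqrt (π * T) * r ^ 2)⁻¹ by positivity),
      abs_of_pos (show (0:ℝ) < (a * r * Real.sqrt (π * T))⁻¹ by positivity)]
  refine step1.trans ?_
  have ht1 : (a * Real.sqrt (π * T) * r ^ 2)⁻¹ *
        (a * Real.exp (a ^ 2 * T - a * r) * (3 * Real.sqrt T + 2 * a * T) * (6 * Real.sqrt T))
      ≤ (18 + 156 * L) * (Real.exp (169 * L ^ 2) * Real.exp (-(a * r))) *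
          (Real.sqrt T / r ^ 2) := by
    have e1 : (a * Real.sqrt (π * T) * r ^ 2)⁻¹ *
        (a * Real.exp (a ^ 2 * T - a * r) * (3 * Real.sqrt T + 2 * a * T) * (6 * Real.sqrt T))
        = Real.exp (a ^ 2 * T - a * r) *
            ((3 * Real.sqrt T + 2 * a * T) * (6 * Real.sqrt T) / Real.sqrt (π * T)) *
            (1 / r ^ 2) := by
      have hppne : Real.sqrt (π * T) ≠ 0 := by positivity
      field_simp
    have h13 : a * Real.sqrt T * T ≤ 13 * L * T := mul_le_mul_of_nonneg_right haT hT.le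
    have e3 : (3 * Real.sqrt T + 2 * a * T) * (6 * Real.sqrt T) ≤ (18 + 156 * L) * T := by
      nlinarith [hss, h13, hs, hT]
    have e2 : (3 * Real.sqrt T + 2 * a * T) * (6 * Real.sqrt T) / Real.sqrt (π * T)
        ≤ (18 + 156 * L) * Real.sqrt T := by
      rw [div_le_iff₀ (by positivity : (0:ℝ) < Real.sqrt (π * T))]
      calc (3 * Real.sqrt T + 2 * a * T) * (6 * Real.sqrt T) ≤ (18 + 156 * L) * T := e3
        _ = (18 + 156 * L) * Real.sqrt T * Real.sqrt T := by rw [mul_assoc, hss]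
        _ ≤ (18 + 156 * L) * Real.sqrt T * Real.sqrt (π * T) := by
            apply mul_le_mul_of_nonneg_left hps (by positivity)
    rw [e1]
    calc Real.exp (a ^ 2 * T - a * r) *
          ((3 * Real.sqrt T + 2 * a * T) * (6 * Real.sqrt T) / Real.sqrt (π * T)) * (1 / r ^ 2)
        ≤ (Real.exp (169 * L ^ 2) * Real.exp (-(a * r))) * ((18 + 156 * L) * Real.sqrt T) *
            (1 / r ^ 2) := by
          apply mul_le_mul_of_nonneg_right ?_ (by positivity)
          exact mul_le_mul hE0 e2 (by positivity) (by positivity)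
      _ = (18 + 156 * L) * (Real.exp (169 * L ^ 2) * Real.exp (-(a * r))) *
            (Real.sqrt T / r ^ 2) := by ring
  have ht2 : (a * r * Real.sqrt (π * T))⁻¹ *
        (a * Real.exp (a ^ 2 * T - a * r) * (8 + 4 * a ^ 2 * T) * (6 * Real.sqrt T))
      ≤ (48 + 4056 * L ^ 2) * (Real.exp (169 * L ^ 2) * Real.exp (-(a * r))) * (1 / r) := by
    have e1 : (a * r * Real.sqrt (π * T))⁻¹ *
        (a * Real.exp (a ^ 2 * T - a * r) * (8 + 4 * a ^ 2 * T) * (6 * Real.sqrt T))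
        = Real.exp (a ^ 2 * T - a * r) *
            ((8 + 4 * a ^ 2 * T) * (6 * Real.sqrt T) / Real.sqrt (π * T)) * (1 / r) := by
      have hppne : Real.sqrt (π * T) ≠ 0 := by positivity
      field_simp
    have e2 : (8 + 4 * a ^ 2 * T) * (6 * Real.sqrt T) / Real.sqrt (π * T)
        ≤ 48 + 4056 * L ^ 2 := by
      rw [div_le_iff₀ (by positivity : (0:ℝ) < Real.sqrt (π * T))]
      calc (8 + 4 * a ^ 2 * T) * (6 * Real.sqrt T)
          ≤ (8 + 4 * (169 * L ^ 2)) * (6 * Real.sqrt T) := by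
            apply mul_le_mul_of_nonneg_right ?_ (by positivity)
            nlinarith [ha2T]
        _ = (48 + 4056 * L ^ 2) * Real.sqrt T := by ring
        _ ≤ (48 + 4056 * L ^ 2) * Real.sqrt (π * T) := by
            apply mul_le_mul_of_nonneg_left hps (by positivity)
    rw [e1]
    calc Real.exp (a ^ 2 * T - a * r) *
          ((8 + 4 * a ^ 2 * T) * (6 * Real.sqrt T) / Real.sqrt (π * T)) * (1 / r)
        ≤ (Real.exp (169 * L ^ 2) * Real.exp (-(a * r))) * (48 + 4056 * L ^ 2) * (1 / r) := by
          apply mul_le_mul_of_nonneg_right ?_ (by positivity)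
          exact mul_le_mul hE0 e2 (by positivity) (by positivity)
      _ = (48 + 4056 * L ^ 2) * (Real.exp (169 * L ^ 2) * Real.exp (-(a * r))) * (1 / r) := by
          ring
  calc (a * Real.sqrt (π * T) * r ^ 2)⁻¹ * |A| + (a * r * Real.sqrt (π * T))⁻¹ * |B|
      ≤ (a * Real.sqrt (π * T) * r ^ 2)⁻¹ *
          (a * Real.exp (a ^ 2 * T - a * r) * (3 * Real.sqrt T + 2 * a * T) * (6 * Real.sqrt T))
        + (a * r * Real.sqrt (π * T))⁻¹ *
          (a * Real.exp (a ^ 2 * T - a * r) * (8 + 4 * a ^ 2 * T) * (6 * Real.sqrt T)) := by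
        apply add_le_add
        · exact mul_le_mul_of_nonneg_left hAle (by positivity)
        · exact mul_le_mul_of_nonneg_left hBle (by positivity)
    _ ≤ (18 + 156 * L) * (Real.exp (169 * L ^ 2) * Real.exp (-(a * r))) * (Real.sqrt T / r ^ 2)
        + (48 + 4056 * L ^ 2) * (Real.exp (169 * L ^ 2) * Real.exp (-(a * r))) * (1 / r) :=
        add_le_add ht1 ht2
    _ ≤ (66 + 156 * L + 4056 * L ^ 2) * (Real.exp (169 * L ^ 2) * Real.exp (-(a * r))) *
          (Real.sqrt T / r ^ 2)
        + (66 + 156 * L + 4056 * L ^ 2) * (Real.exp (169 * L ^ 2) * Real.exp (-(a * r))) *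
          (1 / r) := by
        apply add_le_add
        · apply mul_le_mul_of_nonneg_right ?_ (by positivity)
          apply mul_le_mul_of_nonneg_right ?_ (by positivity)
          nlinarith [sq_nonneg L]
        · apply mul_le_mul_of_nonneg_right ?_ (by positivity)
          apply mul_le_mul_of_nonneg_right ?_ (by positivity)
          nlinarith [hL]
    _ = (66 + 156 * L + 4056 * L ^ 2) * Real.exp (169 * L ^ 2) *
          (Real.sqrt T / r ^ 2 + 1 / r) * Real.exp (-(a * r)) := by ring


theorem mass_excess_gradient_bound_regimes (L : ℝ) (hL : 0 < L) :
    ∃ C > 0, ∀ T β : ℝ, 0 < T → 0 < β → β * Real.sqrt T ≤ L →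
      ∀ x : E3, x ≠ 0 →
        DifferentiableAt ℝ (Qbeta β T) x ∧
        ‖gradient (Qbeta β T) x‖
          ≤ C * ((if ‖x‖ ≤ Real.sqrt T then (1 + Real.sqrt T) / ‖x‖ ^ 2 else 0)
                  + (if Real.sqrt T < ‖x‖ then 1 / ‖x‖ + 1 / (‖x‖ * Real.sqrt T) else 0))
              * Real.exp (-(4 * π * β * ‖x‖)) := by
  refine ⟨2 * ((66 + 156 * L + 4056 * L ^ 2) * Real.exp (169 * L ^ 2)), by positivity, ?_⟩
  intro T β hT hβ hβL x hx
  have hr : 0 < ‖x‖ := norm_pos_iff.mpr hx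
  obtain ⟨D, hD, hDle⟩ := aux_key L T β hL hT hβ hβL ‖x‖ hr
  have hQeq : Qbeta β T = (fun ρ : ℝ => (4 * π * β * ρ * Real.sqrt (π * T))⁻¹ *
      ∫ w in Set.Ioi (0 : ℝ),
        (Real.exp (4 * π * β * w) - 1) * Real.exp (-(ρ + w) ^ 2 / (4 * T)))
      ∘ (fun y : E3 => ‖y‖) := by
    funext y
    simp only [Qbeta, if_neg hT.ne', Function.comp_apply]
  have hnorm : DifferentiableAt ℝ (fun y : E3 => ‖y‖) x :=
    DifferentiableAt.norm (𝕜 := ℝ) differentiableAt_id hx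
  have hcomp := hD.comp_hasFDerivAt x hnorm.hasFDerivAt
  rw [hQeq]
  refine ⟨hcomp.differentiableAt, ?_⟩
  have hgrad : ‖gradient ((fun ρ : ℝ => (4 * π * β * ρ * Real.sqrt (π * T))⁻¹ *
      ∫ w in Set.Ioi (0 : ℝ),
        (Real.exp (4 * π * β * w) - 1) * Real.exp (-(ρ + w) ^ 2 / (4 * T)))
      ∘ (fun y : E3 => ‖y‖)) x‖
      = ‖fderiv ℝ ((fun ρ : ℝ => (4 * π * β * ρ * Real.sqrt (π * T))⁻¹ *
      ∫ w in Set.Ioi (0 : ℝ),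
        (Real.exp (4 * π * β * w) - 1) * Real.exp (-(ρ + w) ^ 2 / (4 * T)))
      ∘ (fun y : E3 => ‖y‖)) x‖ := by
    unfold gradient
    exact LinearIsometryEquiv.norm_map _ _
  rw [hgrad, hcomp.fderiv]
  have hfd1 : ‖fderiv ℝ (fun y : E3 => ‖y‖) x‖ ≤ 1 :=
    NNReal.coe_one ▸ norm_fderiv_le_of_lipschitz ℝ lipschitzWith_one_norm
  have hsm : ‖D • fderiv ℝ (fun y : E3 => ‖y‖) x‖ ≤ |D| := by
    rw [norm_smul, Real.norm_eq_abs]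
    calc |D| * ‖fderiv ℝ (fun y : E3 => ‖y‖) x‖ ≤ |D| * 1 :=
          mul_le_mul_of_nonneg_left hfd1 (abs_nonneg D)
      _ = |D| := mul_one _
  refine hsm.trans (hDle.trans ?_)
  have hbr : Real.sqrt T / ‖x‖ ^ 2 + 1 / ‖x‖
      ≤ 2 * ((if ‖x‖ ≤ Real.sqrt T then (1 + Real.sqrt T) / ‖x‖ ^ 2 else 0)
          + (if Real.sqrt T < ‖x‖ then 1 / ‖x‖ + 1 / (‖x‖ * Real.sqrt T) else 0)) := by
    have hs : 0 < Real.sqrt T := Real.sqrt_pos.2 hT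
    rcases le_or_gt ‖x‖ (Real.sqrt T) with h | h
    · rw [if_pos h, if_neg (not_lt.2 h)]
      have h1 : 1 / ‖x‖ ≤ Real.sqrt T / ‖x‖ ^ 2 := by
        rw [div_le_div_iff₀ hr (by positivity)]
        nlinarith [hr]
      have h2 : Real.sqrt T / ‖x‖ ^ 2 ≤ (1 + Real.sqrt T) / ‖x‖ ^ 2 := by
        gcongr
        linarith
      linarith
    · rw [if_neg (not_le.2 h), if_pos h]
      have h1 : Real.sqrt T / ‖x‖ ^ 2 ≤ 1 / ‖x‖ := by
        rw [div_le_div_iff₀ (by positivity) hr]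
        nlinarith [h, hr]
      have h2 : (0:ℝ) ≤ 1 / (‖x‖ * Real.sqrt T) := by positivity
      linarith
  calc (66 + 156 * L + 4056 * L ^ 2) * Real.exp (169 * L ^ 2) *
        (Real.sqrt T / ‖x‖ ^ 2 + 1 / ‖x‖) * Real.exp (-(4 * π * β * ‖x‖))
      ≤ (66 + 156 * L + 4056 * L ^ 2) * Real.exp (169 * L ^ 2) *
        (2 * ((if ‖x‖ ≤ Real.sqrt T then (1 + Real.sqrt T) / ‖x‖ ^ 2 else 0)
            + (if Real.sqrt T < ‖x‖ then 1 / ‖x‖ + 1 / (‖x‖ * Real.sqrt T) else 0))) *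
        Real.exp (-(4 * π * β * ‖x‖)) := by
        apply mul_le_mul_of_nonneg_right ?_ (Real.exp_nonneg _)
        exact mul_le_mul_of_nonneg_left hbr (by positivity)
    _ = 2 * ((66 + 156 * L + 4056 * L ^ 2) * Real.exp (169 * L ^ 2)) *
        ((if ‖x‖ ≤ Real.sqrt T then (1 + Real.sqrt T) / ‖x‖ ^ 2 else 0)
            + (if Real.sqrt T < ‖x‖ then 1 / ‖x‖ + 1 / (‖x‖ * Real.sqrt T) else 0)) *
        Real.exp (-(4 * π * β * ‖x‖)) := by ring


end
end
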